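/- arXiv:1505.00222 — 6 statements merged into one kernel-verified Lean document; each statement's English description precedes it below -/
import Mathlib

section
/- Let p, q, k be positive integers with k ≥ pq, and let P_k = ℂ[z_{βi} : 1 ≤ β ≤ p+q, 1 ≤ i ≤ k] be the polynomial ring in (p+q)k variables. For 1 ≤ α ≤ p and p+1 ≤ μ ≤ p+q define the quadratic polynomial q_{αμ} = Σ_{i=1}^k z_{αi} z_{μi}. Then the pq polynomials q_{αμ}, listed in any fixed order, form a regular sequence in P_k. -/
open MvPolynomial

/-- The quadratic polynomial `q_{αμ} = Σ_{i=1}^k z_{αi} z_{μi}` in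
`P_k = ℂ[z_{βi} : 1 ≤ β ≤ p+q, 1 ≤ i ≤ k]`, where `α` ranges over the first `p` row
indices and `μ` over the last `q` row indices. -/
noncomputable def qPoly (p q k : ℕ) (α : Fin p) (μ : Fin q) :
    MvPolynomial (Fin (p + q) × Fin k) ℂ :=
  ∑ i : Fin k, X (Fin.castAdd q α, i) * X (Fin.natAdd p μ, i)

namespace Stmt1Aux

abbrev PR (p q : ℕ) := Fin p × Fin q
abbrev σv (p q k : ℕ) := Fin (p + q) × Fin k
abbrev τv (p q k : ℕ) := σv p q k ⊕ Unit
abbrev Poly (p q k : ℕ) := MvPolynomial (σv p q k) ℂ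
abbrev APoly (p q k : ℕ) := MvPolynomial (τv p q k) ℂ

variable {p q k : ℕ}

/-- first (A-block) special variable of a pair -/
def vA (c : PR p q ↪ Fin k) (s : PR p q) : σv p q k := (Fin.castAdd q s.1, c s)
/-- second (B-block) special variable of a pair -/
def vB (c : PR p q ↪ Fin k) (s : PR p q) : σv p q k := (Fin.natAdd p s.2, c s)

lemma vA_ne_vB (c : PR p q ↪ Fin k) (s s' : PR p q) : vA c s ≠ vB c s' := by
  intro h
  have h1 : (Fin.castAdd q s.1 : Fin (p + q)) = Fin.natAdd p s'.2 := congrArg Prod.fst h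
  have := congrArg Fin.val h1
  simp [Fin.castAdd, Fin.natAdd] at this
  omega

/-- the weight function -/
def w (c : PR p q ↪ Fin k) : τv p q k → ℕ
  | .inl v => if ∃ s, v = vA c s ∨ v = vB c s then 1 else 0
  | .inr _ => 1

lemma w_le_one (c : PR p q ↪ Fin k) (t : τv p q k) : w c t ≤ 1 := by
  rcases t with v | u
  · simp only [w]; split <;> omega
  · simp [w]

lemma w_vA (c : PR p q ↪ Fin k) (s : PR p q) : w c (.inl (vA c s)) = 1 := by
  simp only [w]; exact if_pos ⟨s, Or.inl rfl⟩

lemma w_vB (c : PR p q ↪ Fin k) (s : PR p q) : w c (.inl (vB c s)) = 1 := by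
  simp only [w]; exact if_pos ⟨s, Or.inr rfl⟩

/-- sum of weights of the two variables in the `i`-th term of `q_s`. -/
def ww (c : PR p q ↪ Fin k) (s : PR p q) (i : Fin k) : ℕ :=
  w c (.inl (Fin.castAdd q s.1, i)) + w c (.inl (Fin.natAdd p s.2, i))

lemma ww_c (c : PR p q ↪ Fin k) (s : PR p q) : ww c s (c s) = 2 := by
  have h1 := w_vA c s
  have h2 := w_vB c s
  simp only [vA, vB] at h1 h2
  simp [ww, h1, h2]

lemma ww_le_two (c : PR p q ↪ Fin k) (s : PR p q) (i : Fin k) : ww c s i ≤ 2 := by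
  have := w_le_one c (.inl (Fin.castAdd q s.1, i))
  have := w_le_one c (.inl (Fin.natAdd p s.2, i))
  simp only [ww]; omega


lemma castAdd_ne_natAdd (a : Fin p) (b : Fin q) :
    (Fin.castAdd q a : Fin (p + q)) ≠ Fin.natAdd p b := by
  intro h
  have := congrArg Fin.val h
  simp [Fin.castAdd, Fin.natAdd] at this
  omega

lemma eq_vA_iff (c : PR p q ↪ Fin k) (a : Fin p) (i : Fin k) (s' : PR p q) :
    ((Fin.castAdd q a : Fin (p + q)), i) = vA c s' ↔ s'.1 = a ∧ c s' = i := by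
  constructor
  · intro h
    have h1 : (Fin.castAdd q a : Fin (p+q)) = Fin.castAdd q s'.1 := congrArg Prod.fst h
    have h2 : i = c s' := congrArg Prod.snd h
    have := congrArg Fin.val h1
    simp only [Fin.coe_castAdd] at this
    exact ⟨Fin.ext this.symm, h2.symm⟩
  · rintro ⟨h1, h2⟩
    simp [vA, ← h1, h2]

lemma eq_vB_iff (c : PR p q ↪ Fin k) (b : Fin q) (i : Fin k) (s' : PR p q) :
    ((Fin.natAdd p b : Fin (p + q)), i) = vB c s' ↔ s'.2 = b ∧ c s' = i := by
  constructor
  · intro h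
    have h1 : (Fin.natAdd p b : Fin (p+q)) = Fin.natAdd p s'.2 := congrArg Prod.fst h
    have h2 : i = c s' := congrArg Prod.snd h
    have := congrArg Fin.val h1
    simp only [Fin.coe_natAdd] at this
    exact ⟨Fin.ext (by omega), h2.symm⟩
  · rintro ⟨h1, h2⟩
    simp [vB, ← h1, h2]

lemma ww_le_one (c : PR p q ↪ Fin k) (s : PR p q) {i : Fin k} (hi : i ≠ c s) :
    ww c s i ≤ 1 := by
  by_contra hcon
  have hA := w_le_one c (.inl (Fin.castAdd q s.1, i))
  have hB := w_le_one c (.inl (Fin.natAdd p s.2, i))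
  have hA1 : w c (.inl (Fin.castAdd q s.1, i)) = 1 := by simp only [ww] at hcon; omega
  have hB1 : w c (.inl (Fin.natAdd p s.2, i)) = 1 := by simp only [ww] at hcon; omega
  simp only [w] at hA1 hB1
  have hEA : ∃ s', ((Fin.castAdd q s.1 : Fin (p+q)), i) = vA c s' ∨
      ((Fin.castAdd q s.1 : Fin (p+q)), i) = vB c s' := by
    by_contra hc; rw [if_neg hc] at hA1; omega
  have hEB : ∃ s', ((Fin.natAdd p s.2 : Fin (p+q)), i) = vA c s' ∨
      ((Fin.natAdd p s.2 : Fin (p+q)), i) = vB c s' := by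
    by_contra hc; rw [if_neg hc] at hB1; omega
  obtain ⟨s', hs'⟩ := hEA
  obtain ⟨s'', hs''⟩ := hEB
  have h1 : s'.1 = s.1 ∧ c s' = i := by
    rcases hs' with h | h
    · exact (eq_vA_iff c s.1 i s').mp h
    · exact absurd (congrArg Prod.fst h) (castAdd_ne_natAdd s.1 s'.2)
  have h2 : s''.2 = s.2 ∧ c s'' = i := by
    rcases hs'' with h | h
    · exact absurd (congrArg Prod.fst h).symm (castAdd_ne_natAdd s''.1 s.2)
    · exact (eq_vB_iff c s.2 i s'').mp h
  have hss : s' = s'' := c.injective (h1.2.trans h2.2.symm)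
  have hs'eq : s' = s := by
    rcases h1 with ⟨ha, -⟩
    rcases h2 with ⟨hb, -⟩
    rw [hss] at ha ⊢
    exact Prod.ext ha hb
  apply hi
  rw [← h1.2, hs'eq]

noncomputable section

/-- the exponent of the special monomial of a pair -/
def ee (c : PR p q ↪ Fin k) (s : PR p q) : τv p q k →₀ ℕ :=
  Finsupp.single (.inl (vA c s)) 1 + Finsupp.single (.inl (vB c s)) 1

/-- the special monomial of a pair -/
def mP (c : PR p q ↪ Fin k) (s : PR p q) : APoly p q k := monomial (ee c s) 1

/-- the homogenization variable -/
def TT (p q k : ℕ) : APoly p q k := X (.inr ())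

/-- the weighted homogenization of `q_s` -/
def FP (c : PR p q ↪ Fin k) (s : PR p q) : APoly p q k :=
  ∑ i : Fin k, TT p q k ^ (2 - ww c s i) *
    (X (.inl (Fin.castAdd q s.1, i)) * X (.inl (Fin.natAdd p s.2, i)))

/-- the lower-order part of `F_s` -/
def alP (c : PR p q ↪ Fin k) (s : PR p q) : APoly p q k :=
  ∑ i ∈ Finset.univ.erase (c s), TT p q k ^ (1 - ww c s i) *
    (X (.inl (Fin.castAdd q s.1, i)) * X (.inl (Fin.natAdd p s.2, i)))

lemma mP_eq (c : PR p q ↪ Fin k) (s : PR p q) :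
    mP c s = X (.inl (vA c s)) * X (.inl (vB c s)) := by
  rw [mP, ee, X, X, monomial_mul, mul_one]

lemma F_eq (c : PR p q ↪ Fin k) (s : PR p q) :
    FP c s = mP c s + TT p q k * alP c s := by
  rw [FP, ← Finset.add_sum_erase _ _ (Finset.mem_univ (c s))]
  refine congrArg₂ (· + ·) ?_ ?_
  · rw [ww_c, mP_eq, vA, vB]
    norm_num
  · rw [alP, Finset.mul_sum]
    apply Finset.sum_congr rfl
    intro i hi
    have hne : i ≠ c s := (Finset.mem_erase.mp hi).1
    have h1 : ww c s i ≤ 1 := ww_le_one c s hne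
    have : 2 - ww c s i = (1 - ww c s i) + 1 := by omega
    rw [this, pow_succ]
    ring

/-- weighted degree of an exponent vector -/
def wdeg (c : PR p q ↪ Fin k) (D : τv p q k →₀ ℕ) : ℕ := D.sum fun t n => n * w c t

lemma wdeg_add (c : PR p q ↪ Fin k) (D₁ D₂ : τv p q k →₀ ℕ) :
    wdeg c (D₁ + D₂) = wdeg c D₁ + wdeg c D₂ :=
  Finsupp.sum_add_index' (fun _ => zero_mul _) (fun _ _ _ => add_mul _ _ _)

lemma wdeg_single (c : PR p q ↪ Fin k) (t : τv p q k) (n : ℕ) :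
    wdeg c (Finsupp.single t n) = n * w c t :=
  Finsupp.sum_single_index (zero_mul _)

lemma wdeg_ee (c : PR p q ↪ Fin k) (s : PR p q) : wdeg c (ee c s) = 2 := by
  rw [ee, wdeg_add, wdeg_single, wdeg_single, w_vA, w_vB]

lemma wdeg_mono (c : PR p q ↪ Fin k) {D₁ D₂ : τv p q k →₀ ℕ} (h : D₁ ≤ D₂) :
    wdeg c D₁ ≤ wdeg c D₂ := by
  obtain ⟨E, rfl⟩ := le_iff_exists_add.mp h
  rw [wdeg_add]; omega

lemma wdeg_sub (c : PR p q ↪ Fin k) {D₁ D₂ : τv p q k →₀ ℕ} (h : D₁ ≤ D₂) :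
    wdeg c (D₂ - D₁) + wdeg c D₁ = wdeg c D₂ := by
  rw [← wdeg_add, tsub_add_cancel_of_le h]

/-- support of finset sums -/
lemma mem_support_sum {σ : Type*} {ι : Type*} {t : Finset ι} {g : ι → MvPolynomial σ ℂ}
    {D : σ →₀ ℕ} (h : D ∈ (∑ i ∈ t, g i).support) : ∃ i ∈ t, D ∈ (g i).support := by
  rw [mem_support_iff, coeff_sum] at h
  obtain ⟨i, hi, hne⟩ := Finset.exists_ne_zero_of_sum_ne_zero h
  exact ⟨i, hi, mem_support_iff.mpr hne⟩

/-- weighted-homogeneous (by support) -/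
def WHom (c : PR p q ↪ Fin k) (n : ℕ) (x : APoly p q k) : Prop :=
  ∀ D ∈ x.support, wdeg c D = n

lemma WHom_mul {c : PR p q ↪ Fin k} {m n : ℕ} {x y : APoly p q k}
    (hx : WHom c m x) (hy : WHom c n y) : WHom c (m + n) (x * y) := by
  classical
  intro D hD
  have := MvPolynomial.support_mul x y hD
  rw [Finset.mem_add] at this
  obtain ⟨a, ha, b, hb, rfl⟩ := this
  rw [wdeg_add, hx a ha, hy b hb]

lemma WHom_TT_pow (c : PR p q ↪ Fin k) (n : ℕ) : WHom c n (TT p q k ^ n) := by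
  intro D hD
  rw [TT, X_pow_eq_monomial] at hD
  have := support_monomial_subset hD
  rw [Finset.mem_singleton] at this
  subst this
  rw [wdeg_single]
  simp [w]

lemma WHom_sum {c : PR p q ↪ Fin k} {n : ℕ} {ι : Type*} {t : Finset ι}
    {g : ι → APoly p q k} (h : ∀ i ∈ t, WHom c n (g i)) : WHom c n (∑ i ∈ t, g i) := by
  intro D hD
  obtain ⟨i, hi, hDi⟩ := mem_support_sum hD
  exact h i hi D hDi

lemma WHom_sub {c : PR p q ↪ Fin k} {n : ℕ} {x y : APoly p q k}
    (hx : WHom c n x) (hy : WHom c n y) : WHom c n (x - y) := by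
  classical
  intro D hD
  have := MvPolynomial.support_sub _ x y hD
  rw [Finset.mem_union] at this
  rcases this with h | h
  · exact hx D h
  · exact hy D h

lemma FP_term_eq (s : PR p q) (i : Fin k) (a : ℕ) :
    TT p q k ^ a * (X (.inl (Fin.castAdd q s.1, i)) * X (.inl (Fin.natAdd p s.2, i)))
      = monomial (Finsupp.single (.inr () : τv p q k) a
          + (Finsupp.single (.inl (Fin.castAdd q s.1, i)) 1
            + Finsupp.single (.inl (Fin.natAdd p s.2, i)) 1)) 1 := by
  rw [TT, X_pow_eq_monomial, X, X, monomial_mul, monomial_mul]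
  norm_num

lemma WHom_FP (c : PR p q ↪ Fin k) (s : PR p q) : WHom c 2 (FP c s) := by
  rw [FP]
  apply WHom_sum
  intro i _
  intro D hD
  rw [FP_term_eq] at hD
  have := support_monomial_subset hD
  rw [Finset.mem_singleton] at this
  subst this
  rw [wdeg_add, wdeg_add, wdeg_single, wdeg_single, wdeg_single]
  have h2 := ww_le_two c s i
  have hinr : w c (.inr () : τv p q k) = 1 := rfl
  have hww : ww c s i = w c (.inl (Fin.castAdd q s.1, i)) + w c (.inl (Fin.natAdd p s.2, i)) := rfl
  rw [hinr, one_mul, one_mul, mul_one]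
  omega

lemma WHom_alP (c : PR p q ↪ Fin k) (s : PR p q) : WHom c 1 (alP c s) := by
  rw [alP]
  apply WHom_sum
  intro i hi
  have hne : i ≠ c s := (Finset.mem_erase.mp hi).1
  have h1 : ww c s i ≤ 1 := ww_le_one c s hne
  intro D hD
  rw [FP_term_eq] at hD
  have := support_monomial_subset hD
  rw [Finset.mem_singleton] at this
  subst this
  rw [wdeg_add, wdeg_add, wdeg_single, wdeg_single, wdeg_single]
  have hinr : w c (.inr () : τv p q k) = 1 := rfl
  have hww : ww c s i = w c (.inl (Fin.castAdd q s.1, i)) + w c (.inl (Fin.natAdd p s.2, i)) := rfl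
  rw [hinr, one_mul, one_mul, mul_one]
  omega

/-- evaluation `T ↦ 0`, fixing all other variables -/
def psi (p q k : ℕ) : APoly p q k →ₐ[ℂ] APoly p q k :=
  aeval (Sum.elim (fun v => X (.inl v)) (fun _ => 0))

/-- evaluation `T ↦ 1`, renaming other variables to `σv` -/
def phi (p q k : ℕ) : APoly p q k →ₐ[ℂ] Poly p q k :=
  aeval (Sum.elim X (fun _ => 1))

lemma psi_X_inl (v : σv p q k) : psi p q k (X (.inl v)) = X (.inl v) := by
  rw [psi, aeval_X]; rfl

lemma psi_TT : psi p q k (TT p q k) = 0 := by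
  rw [TT, psi, aeval_X]; rfl

lemma phi_X_inl (v : σv p q k) : phi p q k (X (.inl v)) = X v := by
  rw [phi, aeval_X]; rfl

lemma phi_TT : phi p q k (TT p q k) = 1 := by
  rw [TT, phi, aeval_X]; rfl

lemma psi_monomial (D : τv p q k →₀ ℕ) (a : ℂ) :
    psi p q k (monomial D a) = if D (.inr ()) = 0 then monomial D a else 0 := by
  rw [psi, aeval_monomial]
  split_ifs with h
  · have : (D.prod fun t e => (Sum.elim (fun v => X (.inl v))
        (fun _ => (0 : APoly p q k)) t) ^ e) = D.prod fun t e => X t ^ e := by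
      apply Finsupp.prod_congr
      intro t ht
      rcases t with v | u
      · rfl
      · exact absurd (by rw [show u = () from rfl] at *; exact Finsupp.mem_support_iff.mp ht) (by simp [h])
    rw [this, show (algebraMap ℂ (APoly p q k)) a = C a from rfl, ← monomial_eq]
  · have hmem : (.inr () : τv p q k) ∈ D.support := Finsupp.mem_support_iff.mpr h
    rw [Finsupp.prod, Finset.prod_eq_zero hmem (by simp [zero_pow h])]
    rw [mul_zero]

lemma phi_monomial_split (E : τv p q k →₀ ℕ) (eT : ℕ) (a : ℂ) :
    phi p q k (monomial (E + Finsupp.single (.inr ()) eT) a)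
      = phi p q k (monomial E a) := by
  have : monomial (E + Finsupp.single (.inr ()) eT) a
      = monomial E a * monomial (Finsupp.single (.inr () : τv p q k) eT) 1 := by
    rw [monomial_mul, mul_one]
  rw [this, map_mul, ← X_pow_eq_monomial, ← TT, map_pow, phi_TT, one_pow, mul_one]

/-- lift an exponent vector on `σv` to `τv` -/
def up (d : σv p q k →₀ ℕ) : τv p q k →₀ ℕ := d.mapDomain .inl

/-- restrict an exponent vector on `τv` to `σv` -/
def dn (D : τv p q k →₀ ℕ) : σv p q k →₀ ℕ :=
  Finsupp.equivFunOnFinite.symm (fun v => D (.inl v))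

lemma up_apply_inl (d : σv p q k →₀ ℕ) (v : σv p q k) : up d (.inl v) = d v :=
  Finsupp.mapDomain_apply Sum.inl_injective d v

lemma up_apply_inr (d : σv p q k →₀ ℕ) (u : Unit) : up d (.inr u) = 0 :=
  Finsupp.mapDomain_notin_range d _ (by simp)

lemma dn_apply (D : τv p q k →₀ ℕ) (v : σv p q k) : dn D v = D (.inl v) := rfl

lemma D_decomp (D : τv p q k →₀ ℕ) :
    D = up (dn D) + Finsupp.single (.inr ()) (D (.inr ())) := by
  ext t
  rcases t with v | u
  · rw [Finsupp.add_apply, up_apply_inl, dn_apply, Finsupp.single_apply,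
      if_neg (by simp), add_zero]
  · cases u
    rw [Finsupp.add_apply, up_apply_inr, Finsupp.single_apply, if_pos rfl, zero_add]

lemma dn_up (d : σv p q k →₀ ℕ) : dn (up d) = d := by
  ext v; rw [dn_apply, up_apply_inl]

/-- weighted degree downstairs -/
def dX (c : PR p q ↪ Fin k) (d : σv p q k →₀ ℕ) : ℕ := d.sum fun v n => n * w c (.inl v)

lemma wdeg_up (c : PR p q ↪ Fin k) (d : σv p q k →₀ ℕ) : wdeg c (up d) = dX c d := by
  rw [wdeg, up, Finsupp.sum_mapDomain_index_inj Sum.inl_injective]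
  rfl

lemma wdeg_decomp (c : PR p q ↪ Fin k) (D : τv p q k →₀ ℕ) :
    wdeg c D = dX c (dn D) + D (.inr ()) := by
  conv_lhs => rw [D_decomp D]
  have hinr : w c (.inr () : τv p q k) = 1 := rfl
  rw [wdeg_add, wdeg_up, wdeg_single, hinr, mul_one]

lemma phi_monomial_up (d : σv p q k →₀ ℕ) (eT : ℕ) (a : ℂ) :
    phi p q k (monomial (up d + Finsupp.single (.inr ()) eT) a) = monomial d a := by
  rw [phi_monomial_split]
  rw [phi, aeval_monomial]
  have : ((up d).prod fun t e => (Sum.elim X (fun _ => (1 : Poly p q k)) t) ^ e)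
      = d.prod fun v e => X v ^ e := by
    rw [up, Finsupp.prod_mapDomain_index_inj Sum.inl_injective]
    rfl
  rw [this, show (algebraMap ℂ (Poly p q k)) a = C a from rfl, ← monomial_eq]

lemma phi_monomial (D : τv p q k →₀ ℕ) (a : ℂ) :
    phi p q k (monomial D a) = monomial (dn D) a := by
  conv_lhs => rw [D_decomp D]
  rw [phi_monomial_up]

/-- homogenization of a polynomial downstairs -/
def Hg (c : PR p q ↪ Fin k) (N : ℕ) (u : Poly p q k) : APoly p q k :=
  ∑ d ∈ u.support, monomial (up d + Finsupp.single (.inr ()) (N - dX c d)) (coeff d u)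

lemma phi_Hg (c : PR p q ↪ Fin k) (N : ℕ) (u : Poly p q k) :
    phi p q k (Hg c N u) = u := by
  rw [Hg, map_sum]
  have h : ∀ d ∈ u.support,
      phi p q k (monomial (up d + Finsupp.single (.inr ()) (N - dX c d)) (coeff d u))
        = monomial d (coeff d u) := fun d _ => phi_monomial_up _ _ _
  rw [Finset.sum_congr rfl h]
  exact support_sum_monomial_coeff u

lemma WHom_Hg (c : PR p q ↪ Fin k) {N : ℕ} {u : Poly p q k}
    (hN : ∀ d ∈ u.support, dX c d ≤ N) : WHom c N (Hg c N u) := by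
  intro D hD
  obtain ⟨d, hd, hDd⟩ := mem_support_sum hD
  have := support_monomial_subset hDd
  rw [Finset.mem_singleton] at this
  subst this
  have hinr : w c (.inr () : τv p q k) = 1 := rfl
  rw [wdeg_add, wdeg_up, wdeg_single, hinr, mul_one]
  have := hN d hd
  omega

/-- `phi` is injective on weight-homogeneous polynomials -/
lemma phi_inj_homog {c : PR p q ↪ Fin k} {N : ℕ} {Z : APoly p q k}
    (hZ : WHom c N Z) (h0 : phi p q k Z = 0) : Z = 0 := by
  classical
  by_contra hne
  obtain ⟨D₀, hD₀⟩ := Finset.nonempty_iff_ne_empty.mpr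
    (fun h => hne (support_eq_empty.mp h))
  have hphi : phi p q k Z = ∑ D ∈ Z.support, monomial (dn D) (coeff D Z) := by
    conv_lhs => rw [← support_sum_monomial_coeff Z, map_sum]
    exact Finset.sum_congr rfl fun D _ => phi_monomial D _
  have hco : coeff (dn D₀) (phi p q k Z) = coeff D₀ Z := by
    rw [hphi, coeff_sum]
    rw [Finset.sum_eq_single_of_mem D₀ hD₀]
    · rw [coeff_monomial, if_pos rfl]
    · intro D hD hDne
      rw [coeff_monomial]
      apply if_neg
      intro hdn
      apply hDne
      have h1 := wdeg_decomp c D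
      have h2 := wdeg_decomp c D₀
      rw [hZ D hD] at h1
      rw [hZ D₀ hD₀] at h2
      rw [hdn] at h1
      have : D (.inr ()) = D₀ (.inr ()) := by omega
      rw [D_decomp D, D_decomp D₀, hdn, this]
  rw [h0, coeff_zero] at hco
  exact (Finsupp.mem_support_iff.mp hD₀) hco.symm

/-- the part of `g` divisible by `T`, divided by `T` -/
def yPart (p q k : ℕ) (g : APoly p q k) : APoly p q k :=
  ∑ D ∈ g.support.filter (fun D => D (.inr ()) ≠ 0),
    monomial (D - Finsupp.single (.inr ()) 1) (coeff D g)

lemma psi_eq_sum (g : APoly p q k) :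
    psi p q k g = ∑ D ∈ g.support.filter (fun D => D (.inr ()) = 0),
      monomial D (coeff D g) := by
  classical
  conv_lhs => rw [← support_sum_monomial_coeff g, map_sum]
  rw [Finset.sum_filter]
  exact Finset.sum_congr rfl fun D _ => by rw [psi_monomial]

lemma psi_support (g : APoly p q k) : (psi p q k g).support ⊆ g.support := by
  classical
  intro D hD
  rw [psi_eq_sum] at hD
  obtain ⟨E, hE, hDE⟩ := mem_support_sum hD
  have := support_monomial_subset hDE
  rw [Finset.mem_singleton] at this
  subst this
  exact (Finset.mem_filter.mp hE).1

lemma decompT (g : APoly p q k) : g = psi p q k g + TT p q k * yPart p q k g := by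
  classical
  rw [psi_eq_sum, yPart, Finset.mul_sum]
  have h : ∀ D ∈ g.support.filter (fun D => D (.inr ()) ≠ 0),
      TT p q k * monomial (D - Finsupp.single (.inr ()) 1) (coeff D g)
        = monomial D (coeff D g) := by
    intro D hD
    have hne := (Finset.mem_filter.mp hD).2
    have hle : Finsupp.single (.inr () : τv p q k) 1 ≤ D :=
      Finsupp.single_le_iff.mpr (Nat.one_le_iff_ne_zero.mpr hne)
    rw [TT, X, monomial_mul, one_mul, add_tsub_cancel_of_le hle]
  rw [Finset.sum_congr rfl h, Finset.sum_filter_add_sum_filter_not g.support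
    (fun D => D (.inr ()) = 0) (fun D => monomial D (coeff D g))]
  exact (support_sum_monomial_coeff g).symm

lemma yPart_support (c : PR p q ↪ Fin k) (g : APoly p q k) :
    ∀ E ∈ (yPart p q k g).support, ∃ D ∈ g.support, wdeg c E + 1 = wdeg c D := by
  classical
  intro E hE
  rw [yPart] at hE
  obtain ⟨D, hD, hED⟩ := mem_support_sum hE
  have := support_monomial_subset hED
  rw [Finset.mem_singleton] at this
  subst this
  rw [Finset.mem_filter] at hD
  refine ⟨D, hD.1, ?_⟩
  have hle : Finsupp.single (.inr () : τv p q k) 1 ≤ D :=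
    Finsupp.single_le_iff.mpr (Nat.one_le_iff_ne_zero.mpr hD.2)
  have := wdeg_sub c hle
  have hsing : wdeg c (Finsupp.single (.inr () : τv p q k) 1) = 1 := by
    rw [wdeg_single]; rfl
  omega

lemma psi_FP (c : PR p q ↪ Fin k) (s : PR p q) : psi p q k (FP c s) = mP c s := by
  rw [FP, map_sum]
  rw [Finset.sum_eq_single (c s)]
  · rw [map_mul, map_mul, map_pow, psi_TT, ww_c, psi_X_inl, psi_X_inl, mP_eq, vA, vB]
    norm_num
  · intro i _ hne
    rw [map_mul, map_pow, psi_TT, zero_pow (by have := ww_le_one c s hne; omega), zero_mul]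
  · intro h
    exact absurd (Finset.mem_univ _) h

/-- the ideals generated by the homogenizations and by the monomials -/
def JJ (c : PR p q ↪ Fin k) (S : Finset (PR p q)) : Ideal (APoly p q k) :=
  Ideal.span ((FP c) '' S)

def II (c : PR p q ↪ Fin k) (S : Finset (PR p q)) : Ideal (APoly p q k) :=
  Ideal.span ((mP c) '' S)

/-- generic representation lemma for finitely generated ideals -/
lemma mem_span_image_iff {A ι : Type*} [CommRing A] (f : ι → A) (S : Finset ι) (x : A) :
    x ∈ Ideal.span (f '' S) ↔ ∃ b : ι → A, x = ∑ s ∈ S, b s * f s := by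
  classical
  constructor
  · intro hx
    refine Submodule.span_induction ?_ ?_ ?_ ?_ hx
    · rintro y ⟨s, hs, rfl⟩
      rw [Finset.mem_coe] at hs
      exact ⟨fun s' => if s' = s then 1 else 0, by
        rw [Finset.sum_congr rfl (fun s' _ => by rw [ite_mul, one_mul, zero_mul]),
          Finset.sum_ite_eq' S s f, if_pos hs]⟩
    · exact ⟨0, by simp⟩
    · rintro y z - - ⟨bb, hby⟩ ⟨bz, hbz⟩
      exact ⟨bb + bz, by
        rw [hby, hbz, ← Finset.sum_add_distrib]
        exact Finset.sum_congr rfl fun s _ => by simp [add_mul]⟩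
    · rintro r y - ⟨b, hb⟩
      exact ⟨fun s => r * b s, by
        rw [smul_eq_mul, hb, Finset.mul_sum]
        exact Finset.sum_congr rfl fun s _ => by ring⟩
  · rintro ⟨b, rfl⟩
    exact Ideal.sum_mem _ fun s hs => Ideal.mul_mem_left _ _
      (Ideal.subset_span (Set.mem_image_of_mem f (by exact_mod_cast hs)))

lemma FP_mem_JJ {c : PR p q ↪ Fin k} {S : Finset (PR p q)} {s : PR p q} (hs : s ∈ S) :
    FP c s ∈ JJ c S :=
  Ideal.subset_span (Set.mem_image_of_mem _ (by exact_mod_cast hs))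

lemma mP_mem_II {c : PR p q ↪ Fin k} {S : Finset (PR p q)} {s : PR p q} (hs : s ∈ S) :
    mP c s ∈ II c S :=
  Ideal.subset_span (Set.mem_image_of_mem _ (by exact_mod_cast hs))

lemma JJ_mono {c : PR p q ↪ Fin k} {S S' : Finset (PR p q)} (h : S ⊆ S') :
    JJ c S ≤ JJ c S' :=
  Ideal.span_mono (Set.image_mono (by exact_mod_cast h))

lemma mem_II_iff {c : PR p q ↪ Fin k} {S : Finset (PR p q)} {x : APoly p q k} :
    x ∈ II c S ↔ ∀ D ∈ x.support, ∃ s ∈ S, ee c s ≤ D := by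
  have himg : (mP c) '' S = (fun d => monomial d (1 : ℂ)) '' (ee c '' S) := by
    rw [Set.image_image]; rfl
  rw [II, himg, mem_ideal_span_monomial_image]
  constructor
  · intro h D hD
    obtain ⟨si, hsi, hle⟩ := h D hD
    obtain ⟨s, hs, rfl⟩ := hsi
    exact ⟨s, by exact_mod_cast hs, hle⟩
  · intro h D hD
    obtain ⟨s, hs, hle⟩ := h D hD
    exact ⟨ee c s, Set.mem_image_of_mem _ (by exact_mod_cast hs), hle⟩

lemma ee_apply_other (c : PR p q ↪ Fin k) {s s' : PR p q} (hne : s ≠ s') (t : τv p q k)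
    (ht : ee c s t ≠ 0) : ee c s' t = 0 := by
  rw [ee, Finsupp.add_apply, Finsupp.single_apply, Finsupp.single_apply] at ht ⊢
  have hA : t = .inl (vA c s) ∨ t = .inl (vB c s) := by
    by_contra hc
    push_neg at hc
    rw [if_neg (fun h => hc.1 h.symm), if_neg (fun h => hc.2 h.symm)] at ht
    omega
  have hcc : c s ≠ c s' := fun h => hne (c.injective h)
  rcases hA with rfl | rfl
  · have h1 : (Sum.inl (vA c s') : τv p q k) ≠ Sum.inl (vA c s) :=
      fun h => hcc ((congrArg Prod.snd (Sum.inl_injective h)).symm)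
    have h2 : (Sum.inl (vB c s') : τv p q k) ≠ Sum.inl (vA c s) :=
      fun h => vA_ne_vB c s s' (Sum.inl_injective h).symm
    rw [if_neg h1, if_neg h2]
    rfl
  · have h1 : (Sum.inl (vA c s') : τv p q k) ≠ Sum.inl (vB c s) :=
      fun h => vA_ne_vB c s' s (Sum.inl_injective h)
    have h2 : (Sum.inl (vB c s') : τv p q k) ≠ Sum.inl (vB c s) :=
      fun h => hcc ((congrArg Prod.snd (Sum.inl_injective h)).symm)
    rw [if_neg h1, if_neg h2]
    rfl

lemma ee_le_of_le_add (c : PR p q ↪ Fin k) {s s' : PR p q} (hne : s ≠ s')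
    {D : τv p q k →₀ ℕ} (h : ee c s ≤ ee c s' + D) : ee c s ≤ D := by
  rw [Finsupp.le_iff] at h ⊢
  intro t ht
  have h1 := h t ht
  rw [Finsupp.add_apply] at h1
  rw [ee_apply_other c hne t (Finsupp.mem_support_iff.mp ht), zero_add] at h1
  exact h1

/-- L1: the special monomial of `s₀` is a nonzerodivisor mod `II c S` for `s₀ ∉ S`. -/
lemma L1 {c : PR p q ↪ Fin k} {S : Finset (PR p q)} {s₀ : PR p q} (hs₀ : s₀ ∉ S)
    {g : APoly p q k} (h : mP c s₀ * g ∈ II c S) : g ∈ II c S := by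
  rw [mem_II_iff] at h ⊢
  intro D hD
  have hmem : ee c s₀ + D ∈ (mP c s₀ * g).support := by
    rw [mem_support_iff, mP, coeff_monomial_mul, one_mul]
    exact mem_support_iff.mp hD
  obtain ⟨s, hs, hle⟩ := h _ hmem
  have hne : s ≠ s₀ := fun hh => hs₀ (hh ▸ hs)
  exact ⟨s, hs, ee_le_of_le_add c hne hle⟩

/-- representation in the monomial ideal with weight control -/
lemma II_rep {c : PR p q ↪ Fin k} {S : Finset (PR p q)} (sdef : PR p q)
    {x : APoly p q k} (hx : x ∈ II c S) :
    ∃ b : PR p q → APoly p q k, x = ∑ s ∈ S, b s * mP c s ∧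
      ∀ s, ∀ E ∈ (b s).support, ∃ D ∈ x.support, wdeg c E + 2 = wdeg c D := by
  classical
  have hcrit := mem_II_iff.mp hx
  set sel : (τv p q k →₀ ℕ) → PR p q := fun D =>
    if h : ∃ s ∈ S, ee c s ≤ D then h.choose else sdef with hsel
  have hsel1 : ∀ D ∈ x.support, sel D ∈ S ∧ ee c (sel D) ≤ D := by
    intro D hD
    have h := hcrit D hD
    rw [hsel]
    simp only [dif_pos h]
    exact ⟨h.choose_spec.1, h.choose_spec.2⟩
  refine ⟨fun s => ∑ D ∈ x.support.filter (fun D => sel D = s),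
      monomial (D - ee c s) (coeff D x), ?_, ?_⟩
  · have h1 : ∀ s ∈ S,
        (∑ D ∈ x.support.filter (fun D => sel D = s), monomial (D - ee c s) (coeff D x))
            * mP c s
          = ∑ D ∈ x.support.filter (fun D => sel D = s), monomial D (coeff D x) := by
      intro s _
      rw [Finset.sum_mul]
      apply Finset.sum_congr rfl
      intro D hD
      rw [Finset.mem_filter] at hD
      have hle : ee c s ≤ D := hD.2 ▸ (hsel1 D hD.1).2
      rw [mP, monomial_mul, mul_one, tsub_add_cancel_of_le hle]
    rw [Finset.sum_congr rfl h1,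
      Finset.sum_fiberwise_of_maps_to (fun D hD => (hsel1 D hD).1)
        (fun D => monomial D (coeff D x)),
      support_sum_monomial_coeff]
  · intro s E hE
    obtain ⟨D, hD, hED⟩ := mem_support_sum hE
    have := support_monomial_subset hED
    rw [Finset.mem_singleton] at this
    subst this
    rw [Finset.mem_filter] at hD
    have hle : ee c s ≤ D := hD.2 ▸ (hsel1 D hD.1).2
    refine ⟨D, hD.1, ?_⟩
    have := wdeg_sub c hle
    rw [wdeg_ee] at this
    omega

/-- L2: syzygies of the `m`'s lift to `T`-divisible combinations of the `F`'s. -/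
lemma L2 {c : PR p q ↪ Fin k} (S : Finset (PR p q)) (b : PR p q → APoly p q k)
    (hb : ∑ s ∈ S, b s * mP c s = 0) :
    ∃ h ∈ JJ c S, ∑ s ∈ S, b s * FP c s = TT p q k * h := by
  classical
  induction S using Finset.induction_on generalizing b with
  | empty => exact ⟨0, Ideal.zero_mem _, by simp⟩
  | @insert s₀ S hs₀ IH =>
    rw [Finset.sum_insert hs₀] at hb ⊢
    have hmem : mP c s₀ * b s₀ ∈ II c S := by
      have h1 : mP c s₀ * b s₀ = - ∑ s ∈ S, b s * mP c s := by linear_combination hb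
      rw [h1]
      exact neg_mem (Ideal.sum_mem _ fun s hs =>
        Ideal.mul_mem_left _ _ (mP_mem_II hs))
    have hb₀ := L1 hs₀ hmem
    obtain ⟨cc, hcc⟩ := (mem_span_image_iff (mP c) S (b s₀)).mp hb₀
    have hsum0 : ∑ s ∈ S, (b s + cc s * mP c s₀) * mP c s = 0 := by
      have h2 : ∑ s ∈ S, (b s + cc s * mP c s₀) * mP c s
          = (∑ s ∈ S, b s * mP c s) + mP c s₀ * ∑ s ∈ S, cc s * mP c s := by
        rw [Finset.mul_sum, ← Finset.sum_add_distrib]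
        exact Finset.sum_congr rfl fun s _ => by ring
      rw [h2, ← hcc]
      linear_combination hb
    obtain ⟨h', hh'mem, hh'⟩ := IH _ hsum0
    refine ⟨∑ s ∈ S, cc s * (alP c s₀ * FP c s - alP c s * FP c s₀) + h',
      Ideal.add_mem _ (Ideal.sum_mem _ fun s hs => Ideal.mul_mem_left _ _
        (Ideal.sub_mem _
          (Ideal.mul_mem_left _ _ (FP_mem_JJ (Finset.mem_insert_of_mem hs)))
          (Ideal.mul_mem_left _ _ (FP_mem_JJ (Finset.mem_insert_self s₀ S)))))
        (JJ_mono (Finset.subset_insert s₀ S) hh'mem), ?_⟩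
    have key : ∀ s ∈ S, b s * FP c s
        = (b s + cc s * mP c s₀) * FP c s - (cc s * mP c s₀) * FP c s :=
      fun s _ => by ring
    rw [Finset.sum_congr rfl key, Finset.sum_sub_distrib, hh']
    have hb₀F : b s₀ * FP c s₀ = ∑ s ∈ S, (cc s * mP c s) * FP c s₀ := by
      rw [hcc, Finset.sum_mul]
    rw [hb₀F]
    have key2 : ∀ s ∈ S, (cc s * mP c s) * FP c s₀ - (cc s * mP c s₀) * FP c s
        = TT p q k * (cc s * (alP c s₀ * FP c s - alP c s * FP c s₀)) := by
      intro s _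
      have e1 := F_eq c s
      have e2 := F_eq c s₀
      linear_combination (cc s * FP c s) * e2 - (cc s * FP c s₀) * e1
    calc (∑ s ∈ S, cc s * mP c s * FP c s₀) + (TT p q k * h' - ∑ s ∈ S, cc s * mP c s₀ * FP c s)
        = (∑ s ∈ S, (cc s * mP c s * FP c s₀ - cc s * mP c s₀ * FP c s)) + TT p q k * h' := by
          rw [Finset.sum_sub_distrib]; ring
      _ = (∑ s ∈ S, TT p q k * (cc s * (alP c s₀ * FP c s - alP c s * FP c s₀)))
            + TT p q k * h' := by
          rw [Finset.sum_congr rfl key2]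
      _ = TT p q k * ((∑ s ∈ S, cc s * (alP c s₀ * FP c s - alP c s * FP c s₀)) + h') := by
          rw [← Finset.mul_sum, mul_add]

lemma TT_ne_zero : TT p q k ≠ 0 := X_ne_zero _

/-- L3: `T` is a nonzerodivisor mod `JJ c S`. -/
lemma L3 {c : PR p q ↪ Fin k} {S : Finset (PR p q)} {g : APoly p q k}
    (h : TT p q k * g ∈ JJ c S) : g ∈ JJ c S := by
  obtain ⟨a, ha⟩ := (mem_span_image_iff (FP c) S _).mp h
  have h0 : ∑ s ∈ S, psi p q k (a s) * mP c s = 0 := by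
    have h1 := congrArg (psi p q k) ha
    rw [map_mul, psi_TT, zero_mul, map_sum] at h1
    rw [Finset.sum_congr rfl (fun s (_ : s ∈ S) => by rw [map_mul, psi_FP] :
      ∀ s ∈ S, psi p q k (a s * FP c s) = psi p q k (a s) * mP c s)] at h1
    exact h1.symm
  obtain ⟨h', hh'mem, hT⟩ := L2 S (fun s => psi p q k (a s)) h0
  have key : TT p q k * g = TT p q k * (h' + ∑ s ∈ S, yPart p q k (a s) * FP c s) := by
    rw [ha]
    have h2 : ∀ s ∈ S, a s * FP c s
        = psi p q k (a s) * FP c s + TT p q k * (yPart p q k (a s) * FP c s) := by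
      intro s _
      have := decompT (a s)
      linear_combination (FP c s) * this
    rw [Finset.sum_congr rfl h2, Finset.sum_add_distrib, hT, ← Finset.mul_sum, ← mul_add]
  have hg := mul_left_cancel₀ TT_ne_zero key
  rw [hg]
  exact Ideal.add_mem _ hh'mem
    (Ideal.sum_mem _ fun s hs => Ideal.mul_mem_left _ _ (FP_mem_JJ hs))

lemma L3_pow {c : PR p q ↪ Fin k} {S : Finset (PR p q)} {g : APoly p q k} (n : ℕ)
    (h : TT p q k ^ n * g ∈ JJ c S) : g ∈ JJ c S := by
  induction n generalizing g with
  | zero => simpa using h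
  | succ n IH =>
    have : TT p q k ^ n * (TT p q k * g) ∈ JJ c S := by
      rw [← mul_assoc, ← pow_succ]; exact h
    exact L3 (IH this)

lemma psi_step {c : PR p q ↪ Fin k} {S : Finset (PR p q)} {s₀ : PR p q}
    {g : APoly p q k} (hFg : FP c s₀ * g ∈ JJ c S) :
    mP c s₀ * psi p q k g ∈ II c S := by
  obtain ⟨a, ha⟩ := (mem_span_image_iff (FP c) S _).mp hFg
  have h := congrArg (psi p q k) ha
  rw [map_mul, psi_FP, map_sum] at h
  rw [Finset.sum_congr rfl (fun s (_ : s ∈ S) => by rw [map_mul, psi_FP] :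
    ∀ s ∈ S, psi p q k (a s * FP c s) = psi p q k (a s) * mP c s)] at h
  rw [h]
  exact Ideal.sum_mem _ fun s hs => Ideal.mul_mem_left _ _ (mP_mem_II hs)

/-- L4: each `FP c s₀` is a nonzerodivisor mod `JJ c S` for `s₀ ∉ S`. -/
lemma L4 {c : PR p q ↪ Fin k} {S : Finset (PR p q)} {s₀ : PR p q} (hs₀ : s₀ ∉ S) :
    ∀ N (g : APoly p q k), (∀ D ∈ g.support, wdeg c D ≤ N) →
      FP c s₀ * g ∈ JJ c S → g ∈ JJ c S := by
  classical
  intro N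
  induction N with
  | zero =>
    intro g hgw hFg
    have hg2 := L1 hs₀ (psi_step hFg)
    have hempty : psi p q k g = 0 := by
      rw [← support_eq_empty]
      apply Finset.eq_empty_of_forall_notMem
      intro D hD
      obtain ⟨s, _, hle⟩ := mem_II_iff.mp hg2 D hD
      have h1 : (2 : ℕ) ≤ wdeg c D := by
        have := wdeg_mono c hle
        rw [wdeg_ee] at this
        exact this
      have h2 := hgw D (psi_support g hD)
      omega
    have hy : yPart p q k g = 0 := by
      rw [← support_eq_empty]
      apply Finset.eq_empty_of_forall_notMem
      intro E hE
      obtain ⟨D, hD, heq⟩ := yPart_support c g E hE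
      have := hgw D hD
      omega
    have hgz : g = 0 := by
      rw [decompT g, hempty, hy, mul_zero, add_zero]
    rw [hgz]
    exact Ideal.zero_mem _
  | succ N IH =>
    intro g hgw hFg
    have hg2 := L1 hs₀ (psi_step hFg)
    obtain ⟨b, hbeq, hbw⟩ := II_rep s₀ hg2
    set g₁ := yPart p q k g - ∑ s ∈ S, b s * alP c s with hg₁
    have hgdecomp : g = ∑ s ∈ S, b s * FP c s + TT p q k * g₁ := by
      conv_lhs => rw [decompT g]
      rw [hbeq, hg₁]
      have h3 : ∀ s ∈ S, b s * mP c s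
          = b s * FP c s - TT p q k * (b s * alP c s) := by
        intro s _
        have := F_eq c s
        linear_combination (- b s) * this
      rw [Finset.sum_congr rfl h3, Finset.sum_sub_distrib, mul_sub, Finset.mul_sum]
      ring
    have hTFg₁ : TT p q k * (FP c s₀ * g₁) ∈ JJ c S := by
      have h4 : TT p q k * (FP c s₀ * g₁)
          = FP c s₀ * g - FP c s₀ * ∑ s ∈ S, b s * FP c s := by
        rw [hgdecomp]; ring
      rw [h4]
      exact Ideal.sub_mem _ hFg (Ideal.mul_mem_left _ _
        (Ideal.sum_mem _ fun s hs => Ideal.mul_mem_left _ _ (FP_mem_JJ hs)))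
    have hFg₁ := L3 hTFg₁
    have hg₁w : ∀ D ∈ g₁.support, wdeg c D ≤ N := by
      intro D hD
      rw [hg₁] at hD
      have hsub := MvPolynomial.support_sub _ _ _ hD
      rw [Finset.mem_union] at hsub
      rcases hsub with h | h
      · obtain ⟨D', hD', heq⟩ := yPart_support c g D h
        have := hgw D' hD'
        omega
      · obtain ⟨s, _, hDs⟩ := mem_support_sum h
        have hsub2 := MvPolynomial.support_mul _ _ hDs
        rw [Finset.mem_add] at hsub2
        obtain ⟨E, hE, G, hG, rfl⟩ := hsub2
        obtain ⟨D', hD', heq⟩ := hbw s E hE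
        have h1 : wdeg c D' ≤ N + 1 := hgw D' (psi_support g hD')
        have h2 := WHom_alP c s G hG
        rw [wdeg_add, h2]
        omega
    have hg₁J := IH g₁ hg₁w hFg₁
    rw [hgdecomp]
    exact Ideal.add_mem _
      (Ideal.sum_mem _ fun s hs => Ideal.mul_mem_left _ _ (FP_mem_JJ hs))
      (Ideal.mul_mem_left _ _ hg₁J)

def qP (p q k : ℕ) (s : PR p q) : Poly p q k := qPoly p q k s.1 s.2

def QQ (p q k : ℕ) (S : Finset (PR p q)) : Ideal (Poly p q k) :=
  Ideal.span (qP p q k '' S)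

lemma phi_FP (c : PR p q ↪ Fin k) (s : PR p q) : phi p q k (FP c s) = qP p q k s := by
  rw [FP, map_sum, qP, qPoly]
  apply Finset.sum_congr rfl
  intro i _
  rw [map_mul, map_mul, map_pow, phi_TT, one_pow, one_mul, phi_X_inl, phi_X_inl]

/-- The key nonzerodivisor statement downstairs: for any finite set `S` of pairs not
containing `s₀`, `q_{s₀}` is a nonzerodivisor modulo the ideal of the `q_s`, `s ∈ S`. -/
lemma qNZD (c : PR p q ↪ Fin k) {S : Finset (PR p q)} {s₀ : PR p q} (hs₀ : s₀ ∉ S)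
    {u : Poly p q k} (hu : qP p q k s₀ * u ∈ QQ p q k S) : u ∈ QQ p q k S := by
  classical
  obtain ⟨v, hv⟩ := (mem_span_image_iff (qP p q k) S _).mp hu
  set Nu := u.support.sup (dX c) with hNu
  set Nv : PR p q → ℕ := fun s => (v s).support.sup (dX c) with hNv
  set N₀ := max Nu (S.sup Nv) with hN₀
  set Zu := TT p q k ^ (N₀ - Nu) * (FP c s₀ * Hg c Nu u) with hZu
  set Zv := ∑ s ∈ S, TT p q k ^ (N₀ - Nv s) * (Hg c (Nv s) (v s) * FP c s) with hZv
  have hWu : WHom c (N₀ + 2) Zu := by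
    have h1 := WHom_TT_pow c (N₀ - Nu)
    have h3 : WHom c Nu (Hg c Nu u) := WHom_Hg c (fun d hd => Finset.le_sup hd)
    have h0 := WHom_mul h1 (WHom_mul (WHom_FP c s₀) h3)
    have heq : (N₀ - Nu) + (2 + Nu) = N₀ + 2 := by
      have : Nu ≤ N₀ := le_max_left _ _
      omega
    rw [hZu]
    exact heq ▸ h0
  have hWv : WHom c (N₀ + 2) Zv := by
    rw [hZv]
    apply WHom_sum
    intro s hs
    have h1 := WHom_TT_pow c (N₀ - Nv s)
    have h3 : WHom c (Nv s) (Hg c (Nv s) (v s)) := WHom_Hg c (fun d hd => Finset.le_sup hd)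
    have h0 := WHom_mul h1 (WHom_mul h3 (WHom_FP c s))
    have hle : Nv s ≤ N₀ := le_trans (Finset.le_sup hs) (le_max_right _ _)
    have heq : (N₀ - Nv s) + (Nv s + 2) = N₀ + 2 := by omega
    exact heq ▸ h0
  have hphi0 : phi p q k (Zu - Zv) = 0 := by
    rw [map_sub, hZu, hZv, map_mul, map_mul, map_pow, phi_TT, one_pow, one_mul,
      phi_FP, phi_Hg, map_sum]
    rw [Finset.sum_congr rfl (fun s (_ : s ∈ S) => by
      rw [map_mul, map_mul, map_pow, phi_TT, one_pow, one_mul, phi_Hg, phi_FP] :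
      ∀ s ∈ S, phi p q k (TT p q k ^ (N₀ - Nv s) * (Hg c (Nv s) (v s) * FP c s))
        = v s * qP p q k s)]
    rw [hv, sub_self]
  have hZ0 : Zu = Zv := sub_eq_zero.mp (phi_inj_homog (WHom_sub hWu hWv) hphi0)
  have hmem : TT p q k ^ (N₀ - Nu) * (FP c s₀ * Hg c Nu u) ∈ JJ c S := by
    rw [← hZu, hZ0, hZv]
    refine Ideal.sum_mem _ fun s hs => ?_
    have hr : TT p q k ^ (N₀ - Nv s) * (Hg c (Nv s) (v s) * FP c s)
        = (TT p q k ^ (N₀ - Nv s) * Hg c (Nv s) (v s)) * FP c s := by ring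
    rw [hr]
    exact Ideal.mul_mem_left _ _ (FP_mem_JJ hs)
  have h5 := L3_pow _ hmem
  have h6 := L4 hs₀ Nu (Hg c Nu u)
    (fun D hD => le_of_eq (WHom_Hg c (fun d hd => Finset.le_sup hd) D hD)) h5
  have h7 : u ∈ Ideal.map (phi p q k) (JJ c S) := by
    have := Ideal.mem_map_of_mem (phi p q k) h6
    rwa [phi_Hg] at this
  have h8 : Ideal.map (phi p q k) (JJ c S) = QQ p q k S := by
    rw [JJ, Ideal.map_span, QQ, Set.image_image]
    congr 1
    exact Set.image_congr fun s _ => phi_FP c s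
  rwa [h8] at h7

lemma smul_top_eq {R : Type*} [CommRing R] (I : Ideal R) :
    (I • (⊤ : Submodule R R) : Submodule R R) = I := by
  rw [smul_eq_mul, Ideal.mul_top]

lemma isSMulRegular_quot {R : Type*} [CommRing R] {I : Ideal R} {r : R}
    (h : ∀ g, r * g ∈ I → g ∈ I) :
    IsSMulRegular (R ⧸ (I • ⊤ : Submodule R R)) r := by
  intro x y hxy
  obtain ⟨a, rfl⟩ := Submodule.Quotient.mk_surjective _ x
  obtain ⟨b, rfl⟩ := Submodule.Quotient.mk_surjective _ y
  simp only [← Submodule.Quotient.mk_smul] at hxy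
  rw [Submodule.Quotient.eq, smul_top_eq] at hxy
  rw [Submodule.Quotient.eq, smul_top_eq]
  have hxy' : r * (a - b) ∈ I := by
    have : r • a - r • b = r * (a - b) := by
      rw [smul_eq_mul, smul_eq_mul, mul_sub]
    rwa [this] at hxy
  exact h _ hxy'

lemma qP_constantCoeff (s : PR p q) : constantCoeff (qP p q k s) = 0 := by
  rw [qP, qPoly, map_sum]
  simp

lemma QQ_ne_top (S : Finset (PR p q)) : QQ p q k S ≠ ⊤ := by
  intro h
  have h1 : (1 : Poly p q k) ∈ QQ p q k S := h ▸ Submodule.mem_top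
  obtain ⟨b, hb⟩ := (mem_span_image_iff (qP p q k) S _).mp h1
  have h2 := congrArg constantCoeff hb
  rw [map_one, map_sum] at h2
  rw [Finset.sum_congr rfl (fun s (_ : s ∈ S) => by
      rw [map_mul, qP_constantCoeff, mul_zero] :
    ∀ s ∈ S, constantCoeff (b s * qP p q k s) = 0)] at h2
  simp at h2

lemma exists_perm_of_perm_map {α β : Type*} (f : α → β) :
    ∀ (l : List β) (L : List α), l.Perm (L.map f) →
      ∃ L' : List α, L'.Perm L ∧ l = L'.map f := by
  intro l
  induction l with
  | nil =>
    intro L h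
    have h0 : L.map f = [] := List.Perm.eq_nil h.symm
    rw [List.map_eq_nil_iff] at h0
    subst h0
    exact ⟨[], List.Perm.refl _, rfl⟩
  | cons x t IH =>
    intro L h
    have hx : x ∈ L.map f := h.subset List.mem_cons_self
    rw [List.mem_map] at hx
    obtain ⟨a, haL, rfl⟩ := hx
    obtain ⟨L₁, L₂, rfl⟩ := List.append_of_mem haL
    have hperm : (f a :: t).Perm (f a :: (L₁ ++ L₂).map f) := by
      refine h.trans ?_
      rw [List.map_append, List.map_cons, List.map_append]
      exact List.perm_middle
    obtain ⟨L', hL', rfl⟩ := IH (L₁ ++ L₂) hperm.cons_inv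
    exact ⟨a :: L', ((hL'.cons a).trans List.perm_middle.symm), by rw [List.map_cons]⟩

/-- the list of all pairs -/
def plist (p q : ℕ) : List (PR p q) :=
  (List.finRange p).flatMap fun α => (List.finRange q).map fun μ => (α, μ)

lemma plist_nodup : (plist p q).Nodup := by
  rw [plist, List.nodup_flatMap]
  constructor
  · intro α _
    exact (List.nodup_finRange q).map (fun μ μ' h => (Prod.ext_iff.mp h).2)
  · rw [List.pairwise_iff_forall_sublist]
    intro α α' hsub
    have hne : α ≠ α' := by
      intro h
      subst h
      exact absurd (List.Sublist.nodup hsub (List.nodup_finRange p)) (by simp)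
    intro x hx hx'
    rw [List.mem_map] at hx hx'
    obtain ⟨μ, _, rfl⟩ := hx
    obtain ⟨μ', _, h⟩ := hx'
    exact hne ((Prod.ext_iff.mp h).1).symm

lemma not_mem_take {α : Type*} {L : List α} (h : L.Nodup) {i : ℕ} (hi : i < L.length) :
    L[i] ∉ L.take i := by
  intro hmem
  obtain ⟨j, hj, hje⟩ := List.mem_iff_getElem.mp hmem
  have hj' : j < i := lt_of_lt_of_le hj (by rw [List.length_take]; exact min_le_left _ _)
  have hjL : j < L.length := lt_trans hj' hi
  rw [List.getElem_take] at hje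
  have := List.Nodup.getElem_inj_iff h |>.mp hje
  omega

lemma ofList_eq_QQ (lp : List (PR p q)) :
    Ideal.ofList (lp.map (qP p q k)) = QQ p q k lp.toFinset := by
  have hset : {r | r ∈ lp.map (qP p q k)} = qP p q k '' ↑lp.toFinset := by
    ext x
    constructor
    · intro hx
      obtain ⟨s, hs, rfl⟩ := List.mem_map.mp hx
      exact ⟨s, by simpa using hs, rfl⟩
    · rintro ⟨s, hs, rfl⟩
      exact List.mem_map.mpr ⟨s, by simpa using hs, rfl⟩
  exact congrArg Ideal.span hset

lemma isRegular_map (c : PR p q ↪ Fin k) (L : List (PR p q)) (hL : L.Nodup) :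
    RingTheory.Sequence.IsRegular (Poly p q k) (L.map (qP p q k)) := by
  rw [RingTheory.Sequence.isRegular_iff]
  constructor
  · rw [RingTheory.Sequence.isWeaklyRegular_iff]
    intro i hi
    rw [List.length_map] at hi
    have htake : (L.map (qP p q k)).take i = ((L.take i).map (qP p q k)) := by
      rw [List.map_take]
    have hIdeal : Ideal.ofList ((L.map (qP p q k)).take i) = QQ p q k (L.take i).toFinset := by
      rw [htake, ofList_eq_QQ]
    have hnotin : L[i] ∉ (L.take i).toFinset := by
      rw [List.mem_toFinset]
      exact not_mem_take hL hi
    apply isSMulRegular_quot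
    intro g hg
    rw [hIdeal] at hg ⊢
    have helem : (L.map (qP p q k))[i]'(by simpa using hi) = qP p q k L[i] := by
      simp
    rw [helem] at hg
    exact qNZD c hnotin hg
  · intro hEq
    rw [smul_top_eq, ofList_eq_QQ] at hEq
    exact QQ_ne_top L.toFinset hEq.symm

lemma grand_eq (p q k : ℕ) :
    ((List.finRange p).flatMap fun α => (List.finRange q).map fun μ => qPoly p q k α μ)
      = (plist p q).map (qP p q k) := by
  rw [plist, List.map_flatMap]
  apply congrArg (fun f => List.flatMap f (List.finRange p))
  funext α
  rw [List.map_map]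
  rfl

end

end Stmt1Aux

/-- Let `p, q, k` be positive integers with `k ≥ pq`.  Then the `pq`
quadratic polynomials `q_{αμ}` (for `1 ≤ α ≤ p` and `p+1 ≤ μ ≤ p+q`), listed in any
fixed order, form a regular sequence in `P_k`. -/
theorem stmt1 (p q k : ℕ) (hp : 0 < p) (hq : 0 < q) (hk : 0 < k) (hkpq : p * q ≤ k)
    (l : List (MvPolynomial (Fin (p + q) × Fin k) ℂ))
    (hl : l.Perm ((List.finRange p).flatMap fun α =>
      (List.finRange q).map fun μ => qPoly p q k α μ)) :
    RingTheory.Sequence.IsRegular (MvPolynomial (Fin (p + q) × Fin k) ℂ) l := by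
  classical
  have hcard : Fintype.card (Stmt1Aux.PR p q) ≤ Fintype.card (Fin k) := by
    simp only [Fintype.card_prod, Fintype.card_fin]
    exact hkpq
  obtain ⟨c⟩ := Function.Embedding.nonempty_of_card_le hcard
  rw [Stmt1Aux.grand_eq p q k] at hl
  obtain ⟨L, hLp, rfl⟩ := Stmt1Aux.exists_perm_of_perm_map _ l _ hl
  exact Stmt1Aux.isRegular_map c L (hLp.nodup_iff.mpr Stmt1Aux.plist_nodup)
end

section
/- Let p, q, k be positive integers with p ≥ kq, and let P_k = ℂ[z_{βi} : 1 ≤ β ≤ p+q, 1 ≤ i ≤ k]. For 1 ≤ α ≤ p and p+1 ≤ μ ≤ p+q set q_{αμ} = Σ_{i=1}^k z_{αi} z_{μi}. Then the subsequence (q_{α, p+⌈α/k⌉})_{1 ≤ α ≤ kq}, consisting of kq of these quadratics (the block of indices α with (m−1)k < α ≤ mk being paired with μ = p+m for 1 ≤ m ≤ q), is a regular sequence in P_k. -/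
open MvPolynomial

namespace Stmt2Aux

variable {σ : Type*} {A : Type*} [CommRing A]

lemma weight_add_sub {w : σ → ℕ} {a b : σ →₀ ℕ} (h : b ≤ a) :
    Finsupp.weight w a = Finsupp.weight w (a - b) + Finsupp.weight w b := by
  conv_lhs => rw [← tsub_add_cancel_of_le h]
  rw [map_add]

lemma weight_mono {w : σ → ℕ} {a b : σ →₀ ℕ} (h : a ≤ b) :
    Finsupp.weight w a ≤ Finsupp.weight w b := by
  rw [weight_add_sub h]; exact Nat.le_add_left _ _

lemma cop_le {a b ν : σ →₀ ℕ} (hcop : ∀ x, a x = 0 ∨ b x = 0) (h : a ≤ ν + b) : a ≤ ν := by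
  intro x
  have h' := h x
  rw [Finsupp.add_apply] at h'
  rcases hcop x with h0 | h0 <;> omega

lemma exists_of_coeff_mul_ne_zero {p q : MvPolynomial σ A} {ν : σ →₀ ℕ}
    (h : coeff ν (p * q) ≠ 0) :
    ∃ a ∈ p.support, ∃ b ∈ q.support, ν = a + b := by
  classical
  have hm := support_mul p q (mem_support_iff.mpr h)
  rw [Finset.mem_add] at hm
  obtain ⟨a, ha, b, hb, rfl⟩ := hm
  exact ⟨a, ha, b, hb, rfl⟩

/-- Weighted homogeneous component of a product with a monic monomial. -/
lemma wHC_mul_monomial (w : σ → ℕ) (n : ℕ) (m : σ →₀ ℕ) (φ : MvPolynomial σ A) :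
    weightedHomogeneousComponent w n (φ * monomial m 1)
      = if Finsupp.weight w m ≤ n then
          weightedHomogeneousComponent w (n - Finsupp.weight w m) φ * monomial m 1
        else 0 := by
  classical
  ext ν
  by_cases hm : m ≤ ν
  · have hWν : Finsupp.weight w ν = Finsupp.weight w (ν - m) + Finsupp.weight w m :=
      weight_add_sub hm
    rw [coeff_weightedHomogeneousComponent, coeff_mul_monomial', if_pos hm, mul_one,
      apply_ite (coeff ν), coeff_mul_monomial', if_pos hm, mul_one, coeff_zero,
      coeff_weightedHomogeneousComponent]
    split_ifs <;> first | rfl | omega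
  · rw [coeff_weightedHomogeneousComponent, coeff_mul_monomial', if_neg hm,
      apply_ite (coeff ν), coeff_mul_monomial', if_neg hm, coeff_zero]
    split_ifs <;> rfl

/-- The syzygies of pairwise coprime monic monomials are spanned by the Koszul syzygies. -/
lemma syzygy : ∀ {r : ℕ} (m : Fin r → (σ →₀ ℕ))
      (_ : ∀ t s, t ≠ s → ∀ x, m t x = 0 ∨ m s x = 0)
      (p : Fin r → MvPolynomial σ A)
      (_ : ∑ t, p t * monomial (m t) 1 = 0),
      ∃ q : Fin r → Fin r → MvPolynomial σ A,
        (∀ t, q t t = 0) ∧ (∀ t s, q t s = - q s t) ∧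
        (∀ t, p t = ∑ s, q t s * monomial (m s) 1) := by
  intro r
  induction r with
  | zero =>
    intro m hcop p hp
    exact ⟨fun _ _ => 0, fun t => t.elim0, fun t => t.elim0, fun t => t.elim0⟩
  | succ r ih =>
    intro m hcop p hp
    rw [Fin.sum_univ_succ] at hp
    have h0 : p 0 * monomial (m 0) 1 ∈ Ideal.span
        ((fun s => monomial s (1:A)) '' Set.range (fun t : Fin r => m t.succ)) := by
      have he : p 0 * monomial (m 0) 1 = - ∑ t : Fin r, p t.succ * monomial (m t.succ) 1 :=
        eq_neg_of_add_eq_zero_left hp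
      rw [he]
      exact neg_mem (Ideal.sum_mem _ fun t _ =>
        Ideal.mul_mem_left _ _ (Ideal.subset_span ⟨m t.succ, ⟨t, rfl⟩, rfl⟩))
    have h1 : ∀ ν ∈ (p 0).support, ∃ t : Fin r, m t.succ ≤ ν := by
      intro ν hν
      have hmem : ν + m 0 ∈ (p 0 * monomial (m 0) 1).support := by
        rw [mem_support_iff, coeff_mul_monomial', if_pos le_add_self,
          add_tsub_cancel_right, mul_one]
        exact mem_support_iff.mp hν
      obtain ⟨si, hsi, hle⟩ := mem_ideal_span_monomial_image.mp h0 _ hmem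
      obtain ⟨t, rfl⟩ := hsi
      exact ⟨t, cop_le (hcop t.succ 0 (Fin.succ_ne_zero t)) hle⟩
    have h2 : p 0 ∈ Ideal.span
        (Set.range (fun t : Fin r => monomial (m t.succ) (1:A))) := by
      have himg : (fun s => monomial s (1:A)) '' Set.range (fun t : Fin r => m t.succ)
          = Set.range (fun t : Fin r => monomial (m t.succ) (1:A)) := by
        rw [← Set.range_comp]; rfl
      rw [← himg]
      exact mem_ideal_span_monomial_image.mpr
        (fun ν hν => by obtain ⟨t, ht⟩ := h1 ν hν; exact ⟨m t.succ, ⟨t, rfl⟩, ht⟩)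
    rw [Ideal.span, Submodule.mem_span_range_iff_exists_fun] at h2
    obtain ⟨c, hc⟩ := h2
    simp only [smul_eq_mul] at hc
    have hp' : ∑ t : Fin r, (p t.succ + c t * monomial (m 0) 1) * monomial (m t.succ) 1 = 0 := by
      have : ∑ t : Fin r, (p t.succ + c t * monomial (m 0) 1) * monomial (m t.succ) 1
          = (∑ t : Fin r, p t.succ * monomial (m t.succ) 1)
            + (∑ t : Fin r, c t * monomial (m t.succ) 1) * monomial (m 0) 1 := by
        rw [Finset.sum_mul, ← Finset.sum_add_distrib]
        exact Finset.sum_congr rfl fun t _ => by ring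
      rw [this, hc]
      linear_combination hp
    obtain ⟨q', hq'diag, hq'anti, hq'rep⟩ := ih (fun t => m t.succ)
      (fun t s hts => hcop t.succ s.succ (fun h => hts (Fin.succ_injective _ h)))
      (fun t => p t.succ + c t * monomial (m 0) 1) hp'
    refine ⟨Fin.cons (Fin.cons 0 c) (fun t' => Fin.cons (-(c t')) (q' t')), ?_, ?_, ?_⟩
    · intro t
      induction t using Fin.cases with
      | zero => simp
      | succ t' => simp [hq'diag t']
    · intro t s
      induction t using Fin.cases with
      | zero =>
        induction s using Fin.cases with
        | zero => simp
        | succ s' => simp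
      | succ t' =>
        induction s using Fin.cases with
        | zero => simp
        | succ s' => simpa using hq'anti t' s'
    · intro t
      induction t using Fin.cases with
      | zero =>
        rw [Fin.sum_univ_succ]
        simp [hc]
      | succ t' =>
        rw [Fin.sum_univ_succ]
        have := hq'rep t'
        simp only [Fin.cons_succ, Fin.cons_zero] at *
        linear_combination this

lemma wHC_idem (w : σ → ℕ) (n : ℕ) (φ : MvPolynomial σ A) :
    weightedHomogeneousComponent w n (weightedHomogeneousComponent w n φ)
      = weightedHomogeneousComponent w n φ := by
  classical
  ext ν
  rw [coeff_weightedHomogeneousComponent, coeff_weightedHomogeneousComponent]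
  split_ifs <;> rfl

lemma mem_support_wHC {w : σ → ℕ} {n : ℕ} {φ : MvPolynomial σ A} {ν : σ →₀ ℕ}
    (h : ν ∈ (weightedHomogeneousComponent w n φ).support) :
    Finsupp.weight w ν = n ∧ ν ∈ φ.support := by
  classical
  rw [mem_support_iff, coeff_weightedHomogeneousComponent] at h
  split_ifs at h with h1
  · exact ⟨h1, mem_support_iff.mpr h⟩
  · exact absurd rfl h

section Family

variable (w : σ → ℕ) {r : ℕ} (m : Fin r → (σ →₀ ℕ)) (g f : Fin r → MvPolynomial σ A)

/-- Any monomial in the support of `f t = X^{m t} + g t` has weight at most that of `m t`. -/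
lemma support_f_weight_le
    (hf : ∀ t, f t = monomial (m t) 1 + g t)
    (hg : ∀ t, ∀ μ ∈ (g t).support, Finsupp.weight w μ < Finsupp.weight w (m t))
    (t : Fin r) : ∀ b ∈ (f t).support, Finsupp.weight w b ≤ Finsupp.weight w (m t) := by
  classical
  intro b hb
  rw [mem_support_iff, hf t, coeff_add, coeff_monomial] at hb
  by_cases hbm : m t = b
  · subst hbm; rfl
  · rw [if_neg hbm, zero_add] at hb
    exact le_of_lt (hg t b (mem_support_iff.mpr hb))

/-- Main lemma: any nonzero element of the ideal generated by the `f t` has a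
monomial of maximal weight in its support which is divisible by some `m t`. -/
lemma MI
    (hf : ∀ t, f t = monomial (m t) 1 + g t)
    (hg : ∀ t, ∀ μ ∈ (g t).support, Finsupp.weight w μ < Finsupp.weight w (m t))
    (hM : ∀ t, 0 < Finsupp.weight w (m t))
    (hcop : ∀ t s, t ≠ s → ∀ x, m t x = 0 ∨ m s x = 0) :
    ∀ d : ℕ, ∀ h : Fin r → MvPolynomial σ A,
    (∀ t, ∀ μ ∈ (h t).support, Finsupp.weight w μ + Finsupp.weight w (m t) ≤ d) →
    (∑ t, h t * f t) ≠ 0 →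
    ∃ μ ∈ (∑ t, h t * f t).support,
      (∀ ν ∈ (∑ t, h t * f t).support, Finsupp.weight w ν ≤ Finsupp.weight w μ)
      ∧ ∃ t, m t ≤ μ := by
  classical
  intro d
  induction d using Nat.strong_induction_on with
  | _ d IH =>
  intro h hb hz
  set z := ∑ t, h t * f t with hzdef
  -- every monomial of z has weight at most d
  have hsupz : ∀ ν ∈ z.support, Finsupp.weight w ν ≤ d := by
    intro ν hν
    rw [mem_support_iff, hzdef, coeff_sum] at hν
    obtain ⟨t, -, ht⟩ := Finset.exists_ne_zero_of_sum_ne_zero hν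
    obtain ⟨a, ha, b, hbb, rfl⟩ := exists_of_coeff_mul_ne_zero ht
    have h1 := hb t a ha
    have h2 := support_f_weight_le w m g f hf hg t b hbb
    rw [map_add]
    omega
  -- the degree-d part of z
  set p : Fin r → MvPolynomial σ A :=
    fun t => weightedHomogeneousComponent w (d - Finsupp.weight w (m t)) (h t) with hpdef
  have hP : (∑ t, p t * monomial (m t) 1) = weightedHomogeneousComponent w d z := by
    rw [hzdef, map_sum]
    refine Finset.sum_congr rfl fun t _ => ?_
    rw [hf t, mul_add, map_add]
    have h1 : weightedHomogeneousComponent w d (h t * monomial (m t) 1)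
        = p t * monomial (m t) 1 := by
      rw [wHC_mul_monomial]
      by_cases hc : Finsupp.weight w (m t) ≤ d
      · rw [if_pos hc]
      · rw [if_neg hc]
        have hh : h t = 0 := by
          rw [← support_eq_empty]
          by_contra hne
          obtain ⟨μ, hμ⟩ := Finset.nonempty_iff_ne_empty.mpr hne
          have := hb t μ hμ
          omega
        rw [hpdef]
        simp [hh]
    have h2 : weightedHomogeneousComponent w d (h t * g t) = 0 := by
      ext ν
      rw [coeff_weightedHomogeneousComponent, coeff_zero]
      split_ifs with h3
      · by_contra hc
        obtain ⟨a, ha, b, hbb, rfl⟩ := exists_of_coeff_mul_ne_zero hc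
        have h4 := hb t a ha
        have h5 := hg t b hbb
        rw [map_add] at h3
        omega
      · rfl
    rw [h1, h2, add_zero]
  by_cases hPz : weightedHomogeneousComponent w d z = 0
  · -- syzygy case
    have hsyz : ∑ t, p t * monomial (m t) 1 = 0 := by rw [hP, hPz]
    obtain ⟨q, hqdiag, hqanti, hqrep⟩ := syzygy m hcop p hsyz
    set q' : Fin r → Fin r → MvPolynomial σ A := fun t s =>
      if Finsupp.weight w (m t) + Finsupp.weight w (m s) ≤ d then
        weightedHomogeneousComponent w
          (d - Finsupp.weight w (m t) - Finsupp.weight w (m s)) (q t s)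
      else 0 with hq'def
    have hq'diag : ∀ t, q' t t = 0 := by
      intro t; rw [hq'def]; simp [hqdiag t]
    have hq'anti : ∀ t s, q' t s = - q' s t := by
      intro t s
      rw [hq'def]
      simp only
      rw [hqanti t s, map_neg, add_comm (Finsupp.weight w (m s))]
      have : d - Finsupp.weight w (m t) - Finsupp.weight w (m s)
          = d - Finsupp.weight w (m s) - Finsupp.weight w (m t) := by omega
      rw [this]
      split_ifs <;> simp
    have hq'rep : ∀ t, p t = ∑ s, q' t s * monomial (m s) 1 := by
      intro t
      have h0 : p t = weightedHomogeneousComponent w (d - Finsupp.weight w (m t)) (p t) := by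
        rw [hpdef]; exact (wHC_idem w _ _).symm
      rw [h0, hqrep t, map_sum]
      refine Finset.sum_congr rfl fun s _ => ?_
      rw [wHC_mul_monomial]
      simp only [hq'def]
      have hMs := hM s
      by_cases hc : Finsupp.weight w (m t) + Finsupp.weight w (m s) ≤ d
      · rw [if_pos (by omega : Finsupp.weight w (m s) ≤ d - Finsupp.weight w (m t)),
          if_pos hc]
      · rw [if_neg (by omega : ¬ Finsupp.weight w (m s) ≤ d - Finsupp.weight w (m t)),
          if_neg hc, zero_mul]
    -- the new coefficients
    set h' : Fin r → MvPolynomial σ A :=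
      fun t => h t - p t - ∑ s, q' t s * g s with h'def
    have hXm : ∀ s, (monomial (m s) (1:A)) = f s - g s := by
      intro s; rw [hf s]; ring
    have hsum0 : ∑ t, ∑ s, q' t s * f s * f t = 0 := by
      rw [← Finset.sum_product']
      refine Finset.sum_ninvolution Prod.swap ?_ ?_ ?_ ?_
      · intro x
        simp only [Prod.fst_swap, Prod.snd_swap]
        rw [hq'anti x.1 x.2]
        ring
      · intro x hx hswap
        apply hx
        have h1 : x.2 = x.1 := congrArg Prod.fst hswap
        rw [h1, hq'diag, zero_mul, zero_mul]
      · intro x; exact Finset.mem_univ _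
      · intro x; exact Prod.swap_swap x
    have hpf : ∑ t, p t * f t = - ∑ t, (∑ s, q' t s * g s) * f t := by
      have step : ∀ t, p t * f t
          = (∑ s, q' t s * f s * f t) - (∑ s, q' t s * g s) * f t := by
        intro t
        rw [hq'rep t, Finset.sum_mul, Finset.sum_mul, ← Finset.sum_sub_distrib]
        refine Finset.sum_congr rfl fun s _ => ?_
        rw [hXm s]
        ring
      rw [Finset.sum_congr rfl fun t _ => step t, Finset.sum_sub_distrib, hsum0]
      ring
    have hz' : ∑ t, h' t * f t = z := by
      have step : ∀ t, h' t * f t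
          = h t * f t - p t * f t - (∑ s, q' t s * g s) * f t := by
        intro t; rw [h'def]; ring
      rw [Finset.sum_congr rfl fun t _ => step t, Finset.sum_sub_distrib,
        Finset.sum_sub_distrib, hpf, hzdef]
      ring
    -- weight bounds for h'
    have hd0 : d ≠ 0 := by
      intro hd
      apply hz
      rw [hzdef]
      refine Finset.sum_eq_zero fun t _ => ?_
      have hh : h t = 0 := by
        rw [← support_eq_empty]
        by_contra hne
        obtain ⟨μ, hμ⟩ := Finset.nonempty_iff_ne_empty.mpr hne
        have h1 := hb t μ hμ
        have h2 := hM t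
        omega
      rw [hh, zero_mul]
    have hb' : ∀ t, ∀ μ ∈ (h' t).support,
        Finsupp.weight w μ + Finsupp.weight w (m t) ≤ d - 1 := by
      intro t μ hμ
      rw [mem_support_iff, h'def] at hμ
      simp only [coeff_sub, coeff_sum] at hμ
      have hcases : coeff μ (h t) - coeff μ (p t) ≠ 0
          ∨ ∃ s, coeff μ (q' t s * g s) ≠ 0 := by
        by_contra hcon
        push_neg at hcon
        apply hμ
        rw [Finset.sum_eq_zero fun s _ => hcon.2 s, sub_zero, hcon.1]
      rcases hcases with hc | ⟨s, hc⟩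
      · have hpμ : coeff μ (p t)
            = if Finsupp.weight w μ = d - Finsupp.weight w (m t)
              then coeff μ (h t) else 0 := by
          simp only [hpdef]
          exact coeff_weightedHomogeneousComponent _ _ _
        by_cases hww : Finsupp.weight w μ = d - Finsupp.weight w (m t)
        · rw [hpμ, if_pos hww, sub_self] at hc; exact absurd rfl hc
        · rw [hpμ, if_neg hww, sub_zero] at hc
          have h1 := hb t μ (mem_support_iff.mpr hc)
          omega
      · rw [hq'def] at hc
        simp only at hc
        split_ifs at hc with hcond
        · obtain ⟨a, ha, bb, hbb, rfl⟩ := exists_of_coeff_mul_ne_zero hc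
          obtain ⟨haw, -⟩ := mem_support_wHC ha
          have h5 := hg s bb hbb
          have h6 := hM s
          rw [map_add]
          omega
        · rw [zero_mul, coeff_zero] at hc; exact absurd rfl hc
    have hz'' : (∑ t, h' t * f t) ≠ 0 := by rw [hz']; exact hz
    obtain ⟨μ, hμmem, hμmax, hμdvd⟩ := IH (d-1) (by omega) h'
      (fun t μ hμ => hb' t μ hμ) hz''
    rw [hz'] at hμmem hμmax
    exact ⟨μ, hμmem, hμmax, hμdvd⟩
  · -- top part nonzero
    obtain ⟨μ, hμ⟩ := ne_zero_iff.mp hPz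
    have h1 : Finsupp.weight w μ = d ∧ coeff μ z ≠ 0 := by
      rw [coeff_weightedHomogeneousComponent] at hμ
      split_ifs at hμ with h2
      · exact ⟨h2, hμ⟩
      · exact absurd rfl hμ
    have hdvd : ∃ t, m t ≤ μ := by
      have hc : coeff μ (∑ t, p t * monomial (m t) 1) ≠ 0 := by rw [hP]; exact hμ
      rw [coeff_sum] at hc
      obtain ⟨t, -, ht⟩ := Finset.exists_ne_zero_of_sum_ne_zero hc
      rw [coeff_mul_monomial'] at ht
      split_ifs at ht with h3
      · exact ⟨t, h3⟩
      · exact absurd rfl ht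
    exact ⟨μ, mem_support_iff.mpr h1.2,
      fun ν hν => h1.1 ▸ hsupz ν hν, hdvd⟩

/-- If `u` is reduced (no monomial divisible by any `m t`) and `u * (X^M + G)` lies in the
ideal of the `f t`, with `M` coprime to all `m t`, then `u = 0`. -/
lemma NZD_reduced
    (hf : ∀ t, f t = monomial (m t) 1 + g t)
    (hg : ∀ t, ∀ μ ∈ (g t).support, Finsupp.weight w μ < Finsupp.weight w (m t))
    (hM : ∀ t, 0 < Finsupp.weight w (m t))
    (hcop : ∀ t s, t ≠ s → ∀ x, m t x = 0 ∨ m s x = 0)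
    (M : σ →₀ ℕ) (G : MvPolynomial σ A)
    (hG : ∀ μ ∈ G.support, Finsupp.weight w μ < Finsupp.weight w M)
    (hcopM : ∀ t, ∀ x, m t x = 0 ∨ M x = 0)
    (u : MvPolynomial σ A)
    (hured : ∀ μ ∈ u.support, ¬ ∃ t, m t ≤ μ)
    (hmem : u * (monomial M 1 + G) ∈ Ideal.span (Set.range f)) : u = 0 := by
  classical
  by_contra hu0
  obtain ⟨μ0, hμ0mem, hμ0⟩ := Finset.exists_mem_eq_sup u.support
    (Finset.nonempty_iff_ne_empty.mpr (mt support_eq_empty.mp hu0)) (fun μ => Finsupp.weight w μ)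
  set ω := u.support.sup (fun μ => Finsupp.weight w μ) with hω
  rw [Ideal.span, Submodule.mem_span_range_iff_exists_fun] at hmem
  obtain ⟨h, hh⟩ := hmem
  simp only [smul_eq_mul] at hh
  set z := u * (monomial M 1 + G) with hzdef
  have hzsplit : z = u * monomial M 1 + u * G := by rw [hzdef]; ring
  -- coefficient of μ0 + M in z is nonzero
  have hcoefXM : coeff (μ0 + M) (u * monomial M 1) = coeff μ0 u := by
    rw [coeff_mul_monomial', if_pos le_add_self, add_tsub_cancel_right, mul_one]
  have hcoefG : coeff (μ0 + M) (u * G) = 0 := by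
    by_contra hc
    obtain ⟨a, ha, b, hbb, hab⟩ := exists_of_coeff_mul_ne_zero hc
    have h1 : Finsupp.weight w a ≤ ω := hω ▸ Finset.le_sup ha
    have h2 := hG b hbb
    have h3 : Finsupp.weight w (μ0 + M) = Finsupp.weight w a + Finsupp.weight w b := by
      rw [hab, map_add]
    rw [map_add] at h3
    have h4 : Finsupp.weight w μ0 = ω := hμ0.symm
    omega
  have hzne : coeff (μ0 + M) z ≠ 0 := by
    rw [hzsplit, coeff_add, hcoefXM, hcoefG, add_zero]
    exact mem_support_iff.mp hμ0mem
  -- apply the main lemma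
  set d₀ := Finset.univ.sup
    (fun t => (h t).support.sup (fun μ => Finsupp.weight w μ) + Finsupp.weight w (m t)) with hd₀
  have hbound : ∀ t, ∀ μ ∈ (h t).support,
      Finsupp.weight w μ + Finsupp.weight w (m t) ≤ d₀ := by
    intro t μ hμ
    refine le_trans ?_ (Finset.le_sup (Finset.mem_univ t))
    exact Nat.add_le_add_right (Finset.le_sup hμ) _
  have hzz : (∑ t, h t * f t) ≠ 0 := by
    rw [hh]
    intro hzz0
    rw [hzz0, coeff_zero] at hzne
    exact hzne rfl
  obtain ⟨ν, hνmem, hνmax, t, ht⟩ := MI w m g f hf hg hM hcop d₀ h hbound hzz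
  rw [hh] at hνmem hνmax
  -- ν has weight at least that of μ0 + M
  have hν1 : Finsupp.weight w (μ0 + M) ≤ Finsupp.weight w ν :=
    hνmax _ (mem_support_iff.mpr hzne)
  rw [map_add] at hν1
  have h4 : Finsupp.weight w μ0 = ω := hμ0.symm
  -- ν cannot come from u * G
  have hνG : coeff ν (u * G) = 0 := by
    by_contra hc
    obtain ⟨a, ha, b, hbb, hab⟩ := exists_of_coeff_mul_ne_zero hc
    have h1 : Finsupp.weight w a ≤ ω := hω ▸ Finset.le_sup ha
    have h2 := hG b hbb
    have h3 : Finsupp.weight w ν = Finsupp.weight w a + Finsupp.weight w b := by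
      rw [hab, map_add]
    omega
  have hνXM : coeff ν (u * monomial M 1) ≠ 0 := by
    intro hc
    rw [mem_support_iff, hzsplit, coeff_add, hc, hνG, add_zero] at hνmem
    exact hνmem rfl
  rw [coeff_mul_monomial'] at hνXM
  split_ifs at hνXM with h5
  · rw [mul_one] at hνXM
    refine hured (ν - M) (mem_support_iff.mpr hνXM) ⟨t, ?_⟩
    have h6 : ν = (ν - M) + M := (tsub_add_cancel_of_le h5).symm
    exact cop_le (hcopM t) (h6 ▸ ht)
  · exact hνXM rfl

/-- Multiplication by `X^M + G` is injective modulo the ideal of the `f t`. -/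
lemma NZD
    (hf : ∀ t, f t = monomial (m t) 1 + g t)
    (hg : ∀ t, ∀ μ ∈ (g t).support, Finsupp.weight w μ < Finsupp.weight w (m t))
    (hM : ∀ t, 0 < Finsupp.weight w (m t))
    (hcop : ∀ t s, t ≠ s → ∀ x, m t x = 0 ∨ m s x = 0)
    (M : σ →₀ ℕ) (G : MvPolynomial σ A)
    (hG : ∀ μ ∈ G.support, Finsupp.weight w μ < Finsupp.weight w M)
    (hcopM : ∀ t, ∀ x, m t x = 0 ∨ M x = 0)
    (u : MvPolynomial σ A)
    (hmem : u * (monomial M 1 + G) ∈ Ideal.span (Set.range f)) :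
    u ∈ Ideal.span (Set.range f) := by
  classical
  set I := Ideal.span (Set.range f) with hI
  set F := monomial M 1 + G with hF
  have main : ∀ d : ℕ, ∀ u : MvPolynomial σ A,
      (∀ μ ∈ u.support, (∃ t, m t ≤ μ) → Finsupp.weight w μ < d) →
      u * F ∈ I → u ∈ I := by
    intro d
    induction d using Nat.strong_induction_on with
    | _ d IH =>
    match d with
    | 0 =>
      intro u hbad hmem
      have hured : ∀ μ ∈ u.support, ¬ ∃ t, m t ≤ μ := by
        intro μ hμ hex
        exact absurd (hbad μ hμ hex) (by omega)
      rw [NZD_reduced w m g f hf hg hM hcop M G hG hcopM u hured hmem]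
      exact zero_mem I
    | (dd+1) =>
      have inner : ∀ n : ℕ, ∀ u : MvPolynomial σ A,
          (∀ μ ∈ u.support, (∃ t, m t ≤ μ) → Finsupp.weight w μ < dd + 1) →
          (u.support.filter
            (fun μ => (∃ t, m t ≤ μ) ∧ Finsupp.weight w μ = dd)).card ≤ n →
          u * F ∈ I → u ∈ I := by
        intro n
        induction n with
        | zero =>
          intro u hb hcard hmem
          refine IH dd (by omega) u ?_ hmem
          intro μ hμ hex
          have h1 := hb μ hμ hex
          have h2 : Finsupp.weight w μ ≠ dd := by
            intro heq
            have : μ ∈ u.support.filter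
                (fun μ => (∃ t, m t ≤ μ) ∧ Finsupp.weight w μ = dd) :=
              Finset.mem_filter.mpr ⟨hμ, hex, heq⟩
            have := Finset.card_pos.mpr ⟨μ, this⟩
            omega
          omega
        | succ n ihn =>
          intro u hb hcard hmem
          by_cases he : (u.support.filter
              (fun μ => (∃ t, m t ≤ μ) ∧ Finsupp.weight w μ = dd)).card ≤ n
          · exact ihn u hb he hmem
          obtain ⟨μ, hμf⟩ : ∃ μ, μ ∈ u.support.filter
              (fun μ => (∃ t, m t ≤ μ) ∧ Finsupp.weight w μ = dd) := by
            rcases Finset.eq_empty_or_nonempty (u.support.filter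
              (fun μ => (∃ t, m t ≤ μ) ∧ Finsupp.weight w μ = dd)) with hemp | ⟨μ, hμ⟩
            · rw [hemp] at he; simp at he
            · exact ⟨μ, hμ⟩
          obtain ⟨hμsupp, ⟨t, hts⟩, hWμ⟩ := Finset.mem_filter.mp hμf
          set u' := u - monomial (μ - m t) (coeff μ u) * f t with hu'def
          have hmono : monomial (μ - m t) (coeff μ u) * f t
              = monomial μ (coeff μ u) + monomial (μ - m t) (coeff μ u) * g t := by
            rw [hf t, mul_add, monomial_mul, tsub_add_cancel_of_le hts, mul_one]
          have hWsub : Finsupp.weight w μ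
              = Finsupp.weight w (μ - m t) + Finsupp.weight w (m t) := weight_add_sub hts
          have hsuppg : ∀ ν, coeff ν (monomial (μ - m t) (coeff μ u) * g t) ≠ 0 →
              Finsupp.weight w ν < dd := by
            intro ν hc
            obtain ⟨a, ha, b, hbb, hab⟩ := exists_of_coeff_mul_ne_zero hc
            have ha' : a = μ - m t := by
              by_contra hne
              rw [mem_support_iff, coeff_monomial, if_neg (fun hh => hne hh.symm)] at ha
              exact ha rfl
            have h2 := hg t b hbb
            have h3 : Finsupp.weight w ν = Finsupp.weight w a + Finsupp.weight w b := by
              rw [hab, map_add]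
            rw [ha'] at h3
            omega
          have hcoefμ : coeff μ u' = 0 := by
            rw [hu'def, coeff_sub, hmono, coeff_add, coeff_monomial, if_pos rfl]
            have : coeff μ (monomial (μ - m t) (coeff μ u) * g t) = 0 := by
              by_contra hc
              have := hsuppg μ hc
              omega
            rw [this, add_zero, sub_self]
          have hsupp' : ∀ ν ∈ u'.support, (ν ∈ u.support ∧ ν ≠ μ) ∨ Finsupp.weight w ν < dd := by
            intro ν hν
            by_cases hνμ : ν = μ
            · subst hνμ; rw [mem_support_iff, hcoefμ] at hν; exact absurd rfl hν
            by_cases hνu : ν ∈ u.support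
            · exact Or.inl ⟨hνu, hνμ⟩
            · right
              rw [mem_support_iff, hu'def, coeff_sub] at hν
              rw [notMem_support_iff] at hνu
              rw [hνu, zero_sub, neg_ne_zero, hmono, coeff_add, coeff_monomial,
                if_neg (fun hh => hνμ hh.symm), zero_add] at hν
              exact hsuppg ν hν
          have hb' : ∀ ν ∈ u'.support, (∃ t, m t ≤ ν) → Finsupp.weight w ν < dd + 1 := by
            intro ν hν hex
            rcases hsupp' ν hν with ⟨hνu, -⟩ | hlt
            · exact hb ν hνu hex
            · omega
          have hcard' : (u'.support.filter
              (fun ν => (∃ t, m t ≤ ν) ∧ Finsupp.weight w ν = dd)).card ≤ n := by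
            have hsub : u'.support.filter
                (fun ν => (∃ t, m t ≤ ν) ∧ Finsupp.weight w ν = dd)
                ⊆ (u.support.filter
                  (fun ν => (∃ t, m t ≤ ν) ∧ Finsupp.weight w ν = dd)).erase μ := by
              intro ν hν
              obtain ⟨hν1, hν2, hν3⟩ := Finset.mem_filter.mp hν
              rcases hsupp' ν hν1 with ⟨hνu, hνμ⟩ | hlt
              · exact Finset.mem_erase.mpr ⟨hνμ, Finset.mem_filter.mpr ⟨hνu, hν2, hν3⟩⟩
              · omega
            have h1 := Finset.card_le_card hsub
            rw [Finset.card_erase_of_mem hμf] at h1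
            omega
          have hmem' : u' * F ∈ I := by
            rw [hu'def, sub_mul]
            refine Submodule.sub_mem I hmem ?_
            refine Ideal.mul_mem_right F I (Ideal.mul_mem_left I _ ?_)
            exact Ideal.subset_span ⟨t, rfl⟩
          have hu' := ihn u' hb' hcard' hmem'
          have : u = u' + monomial (μ - m t) (coeff μ u) * f t := by
            rw [hu'def]; ring
          rw [this]
          refine Submodule.add_mem I hu' (Ideal.mul_mem_left I _ (Ideal.subset_span ⟨t, rfl⟩))
      intro u hbad hmem
      exact inner (u.support.filter
        (fun μ => (∃ t, m t ≤ μ) ∧ Finsupp.weight w μ = dd)).card u hbad le_rfl hmem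
  refine main (u.support.sup (fun μ => Finsupp.weight w μ) + 1) u ?_ hmem
  intro μ hμ _
  have := Finset.le_sup (f := fun μ => Finsupp.weight w μ) hμ
  exact Nat.lt_succ_of_le (by simpa using this)

/-- The `f t` form a weakly regular sequence. -/
theorem isWeaklyRegular_ofFn
    (hf : ∀ t, f t = monomial (m t) 1 + g t)
    (hg : ∀ t, ∀ μ ∈ (g t).support, Finsupp.weight w μ < Finsupp.weight w (m t))
    (hM : ∀ t, 0 < Finsupp.weight w (m t))
    (hcop : ∀ t s, t ≠ s → ∀ x, m t x = 0 ∨ m s x = 0) :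
    RingTheory.Sequence.IsWeaklyRegular (MvPolynomial σ A) (List.ofFn f) := by
  refine ⟨fun i hi => ?_⟩
  rw [List.length_ofFn] at hi
  have hel : (List.ofFn f)[i]'(by rw [List.length_ofFn]; exact hi) = f ⟨i, hi⟩ := by
    simp [List.getElem_ofFn]
  have hofList : Ideal.ofList ((List.ofFn f).take i)
      = Ideal.span (Set.range (fun t : Fin i => f (Fin.castLE (le_of_lt hi) t))) := by
    rw [← Fin.ofFn_take_eq_take_ofFn (le_of_lt hi) f]
    unfold Ideal.ofList
    congr 1
    ext x
    simp only [Set.mem_setOf_eq, List.mem_ofFn, Set.mem_range, Fin.take_apply]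
  rw [hel, hofList]
  set I := Ideal.span (Set.range (fun t : Fin i => f (Fin.castLE (le_of_lt hi) t))) with hIdef
  have hN : (I • ⊤ : Submodule (MvPolynomial σ A) (MvPolynomial σ A)) = I := by
    rw [smul_eq_mul, Ideal.mul_top]
  intro a b hab
  obtain ⟨x, rfl⟩ := Submodule.Quotient.mk_surjective _ a
  obtain ⟨y, rfl⟩ := Submodule.Quotient.mk_surjective _ b
  simp only [← Submodule.Quotient.mk_smul] at hab
  rw [Submodule.Quotient.eq] at hab
  rw [Submodule.Quotient.eq]
  rw [hN] at hab ⊢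
  have hab' : (x - y) * f ⟨i, hi⟩ ∈ I := by
    have : f ⟨i, hi⟩ • x - f ⟨i, hi⟩ • y = (x - y) * f ⟨i, hi⟩ := by
      rw [smul_eq_mul, smul_eq_mul]; ring
    rwa [this] at hab
  have key : (x - y) ∈ I := by
    refine NZD w (fun t : Fin i => m (Fin.castLE (le_of_lt hi) t))
      (fun t : Fin i => g (Fin.castLE (le_of_lt hi) t))
      (fun t : Fin i => f (Fin.castLE (le_of_lt hi) t))
      (fun t => hf _) (fun t => hg _) (fun t => hM _)
      (fun t s hts => hcop _ _ (fun hh => hts (Fin.castLE_injective _ hh)))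
      (m ⟨i, hi⟩) (g ⟨i, hi⟩) (hg _)
      (fun t => hcop _ _ ?_) (x - y) ?_
    · intro hh
      have : (Fin.castLE (le_of_lt hi) t).val = i := congrArg Fin.val hh
      simp only [Fin.coe_castLE] at this
      omega
    · rw [← hf ⟨i, hi⟩]
      exact hab'
  exact key

/-- The `f t` form a regular sequence. -/
theorem isRegular_ofFn [Nontrivial A]
    (hf : ∀ t, f t = monomial (m t) 1 + g t)
    (hg : ∀ t, ∀ μ ∈ (g t).support, Finsupp.weight w μ < Finsupp.weight w (m t))
    (hM : ∀ t, 0 < Finsupp.weight w (m t))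
    (hcop : ∀ t s, t ≠ s → ∀ x, m t x = 0 ∨ m s x = 0)
    (hconst : ∀ t, constantCoeff (f t) = 0) :
    RingTheory.Sequence.IsRegular (MvPolynomial σ A) (List.ofFn f) := by
  refine ⟨isWeaklyRegular_ofFn w m g f hf hg hM hcop, ?_⟩
  intro heq
  have h1 : (1 : MvPolynomial σ A) ∈ Ideal.ofList (List.ofFn f)
      • (⊤ : Submodule (MvPolynomial σ A) (MvPolynomial σ A)) :=
    heq ▸ Submodule.mem_top
  rw [smul_eq_mul, Ideal.mul_top] at h1
  have h2 : Ideal.ofList (List.ofFn f) ≤ RingHom.ker (constantCoeff (σ := σ) (R := A)) := by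
    rw [Ideal.span_le]
    rintro x hx
    rw [Set.mem_setOf_eq, List.mem_ofFn] at hx
    obtain ⟨t, rfl⟩ := hx
    exact hconst t
  have h3 := h2 h1
  rw [RingHom.mem_ker, map_one] at h3
  exact one_ne_zero h3

end Family

lemma weight_single (w : σ → ℕ) (x : σ) (n : ℕ) :
    Finsupp.weight w (Finsupp.single x n) = n * w x := by
  rw [Finsupp.weight_apply, Finsupp.sum_single_index] <;> simp

end Stmt2Aux

open MvPolynomial

namespace Stmt2Inst

/-- first-block row index -/
def vA (p q k : ℕ) (hpkq : k * q ≤ p) (a : Fin (k*q)) : Fin (p+q) :=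
  Fin.castAdd q (Fin.castLE hpkq a)

/-- second-block row index -/
def vM (p q k : ℕ) (hk : 0 < k) (a : Fin (k*q)) : Fin (p+q) :=
  Fin.natAdd p ⟨a.val / k, (Nat.div_lt_iff_lt_mul hk).mpr (by simpa [mul_comm] using a.isLt)⟩

/-- distinguished column index -/
def i0 (p q k : ℕ) (hk : 0 < k) (a : Fin (k*q)) : Fin k := ⟨a.val % k, Nat.mod_lt _ hk⟩

@[simp] lemma vA_val (p q k : ℕ) (hpkq : k * q ≤ p) (a : Fin (k*q)) :
    ((vA p q k hpkq a : Fin (p+q)) : ℕ) = a.val := rfl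
@[simp] lemma vM_val (p q k : ℕ) (hk : 0 < k) (a : Fin (k*q)) :
    ((vM p q k hk a : Fin (p+q)) : ℕ) = p + a.val / k := rfl
@[simp] lemma i0_val (p q k : ℕ) (hk : 0 < k) (a : Fin (k*q)) :
    ((i0 p q k hk a : Fin k) : ℕ) = a.val % k := rfl

/-- the leading monomial -/
noncomputable def mm (p q k : ℕ) (hk : 0 < k) (hpkq : k * q ≤ p) (a : Fin (k*q)) :
    (Fin (p+q) × Fin k) →₀ ℕ :=
  Finsupp.single (vA p q k hpkq a, i0 p q k hk a) 1
    + Finsupp.single (vM p q k hk a, i0 p q k hk a) 1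

/-- the tail -/
noncomputable def gg (p q k : ℕ) (hk : 0 < k) (hpkq : k * q ≤ p) (a : Fin (k*q)) :
    MvPolynomial (Fin (p+q) × Fin k) ℂ :=
  ∑ i ∈ Finset.univ.erase (i0 p q k hk a),
    X (vA p q k hpkq a, i) * X (vM p q k hk a, i)

/-- the weight function -/
def ww (p q k : ℕ) (v : Fin (p+q) × Fin k) : ℕ :=
  if (v.1 : ℕ) < p then (k+1)*(k - (v.2 : ℕ)) + (if (v.1 : ℕ) % k = (v.2 : ℕ) then 1 else 0)
  else (k+1)*((v.2 : ℕ)+1)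

lemma ww_vA (p q k : ℕ) (hpkq : k * q ≤ p) (a : Fin (k*q)) (i : Fin k) :
    ww p q k (vA p q k hpkq a, i)
      = (k+1)*(k - (i : ℕ)) + (if a.val % k = (i : ℕ) then 1 else 0) := by
  have ha : a.val < p := lt_of_lt_of_le a.isLt hpkq
  simp [ww, ha]
  congr

lemma ww_vM (p q k : ℕ) (hk : 0 < k) (a : Fin (k*q)) (i : Fin k) :
    ww p q k (vM p q k hk a, i) = (k+1)*((i : ℕ)+1) := by
  simp [ww]

lemma X_mul_X {p q k : ℕ} (v1 v2 : Fin (p+q) × Fin k) :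
    (X v1 * X v2 : MvPolynomial (Fin (p+q) × Fin k) ℂ)
      = monomial (Finsupp.single v1 1 + Finsupp.single v2 1) 1 := by
  rw [X, X, monomial_mul, one_mul]

lemma weight_mm (p q k : ℕ) (hk : 0 < k) (hpkq : k * q ≤ p) (a : Fin (k*q)) :
    Finsupp.weight (ww p q k) (mm p q k hk hpkq a) = (k+1)*(k+1) + 1 := by
  have hmod : a.val % k < k := Nat.mod_lt _ hk
  rw [mm, map_add, Stmt2Aux.weight_single, Stmt2Aux.weight_single, one_mul, one_mul,
    ww_vA p q k hpkq, ww_vM p q k hk]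
  rw [i0_val, if_pos rfl]
  have h1 : (k+1)*(k - a.val % k) + (k+1)*(a.val % k + 1) = (k+1)*(k+1) := by
    rw [← Nat.mul_add]
    congr 1
    omega
  omega

lemma weight_gg (p q k : ℕ) (hk : 0 < k) (hpkq : k * q ≤ p) (a : Fin (k*q)) :
    ∀ μ ∈ (gg p q k hk hpkq a).support,
      Finsupp.weight (ww p q k) μ < Finsupp.weight (ww p q k) (mm p q k hk hpkq a) := by
  intro μ hμ
  rw [mem_support_iff, gg, coeff_sum] at hμ
  obtain ⟨i, hi, hci⟩ := Finset.exists_ne_zero_of_sum_ne_zero hμ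
  rw [X_mul_X, coeff_monomial] at hci
  have hμeq : Finsupp.single (vA p q k hpkq a, i) 1
      + Finsupp.single (vM p q k hk a, i) 1 = μ := by
    by_contra hne
    rw [if_neg hne] at hci
    exact hci rfl
  have hii : (i : ℕ) ≠ a.val % k := by
    intro hh
    exact (Finset.mem_erase.mp hi).1 (Fin.ext (by simp [hh]))
  rw [← hμeq, map_add, Stmt2Aux.weight_single, Stmt2Aux.weight_single, one_mul, one_mul,
    ww_vA p q k hpkq, ww_vM p q k hk, weight_mm p q k hk hpkq,
    if_neg (fun hh => hii hh.symm)]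
  have h1 : (k+1)*(k - (i:ℕ)) + (k+1)*((i:ℕ) + 1) = (k+1)*(k+1) := by
    rw [← Nat.mul_add]
    congr 1
    have := i.isLt
    omega
  omega

lemma mm_support (p q k : ℕ) (hk : 0 < k) (hpkq : k * q ≤ p) (a : Fin (k*q))
    (x : Fin (p+q) × Fin k) (hx : mm p q k hk hpkq a x ≠ 0) :
    x = (vA p q k hpkq a, i0 p q k hk a) ∨ x = (vM p q k hk a, i0 p q k hk a) := by
  classical
  rw [mm, Finsupp.add_apply, Finsupp.single_apply, Finsupp.single_apply] at hx
  by_contra hcon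
  push_neg at hcon
  rw [if_neg (fun hh => hcon.1 hh.symm), if_neg (fun hh => hcon.2 hh.symm)] at hx
  exact hx rfl

lemma mm_cop (p q k : ℕ) (hk : 0 < k) (hpkq : k * q ≤ p) (a b : Fin (k*q)) (hab : a ≠ b)
    (x : Fin (p+q) × Fin k) :
    mm p q k hk hpkq a x = 0 ∨ mm p q k hk hpkq b x = 0 := by
  by_contra hcon
  push_neg at hcon
  have hx1 := mm_support p q k hk hpkq a x hcon.1
  have hx2 := mm_support p q k hk hpkq b x hcon.2
  have hap : a.val < p := lt_of_lt_of_le a.isLt hpkq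
  have hbp : b.val < p := lt_of_lt_of_le b.isLt hpkq
  apply hab
  apply Fin.ext
  rcases hx1 with h1 | h1 <;> rcases hx2 with h2 | h2 <;> rw [h1] at h2
  · have := congrArg (fun z => (z.1 : ℕ)) h2
    simpa using this
  · have := congrArg (fun z => (z.1 : ℕ)) h2
    simp at this
    have hge : p ≤ (a : ℕ) := by rw [this]; exact Nat.le_add_right _ _
    omega
  · have := congrArg (fun z => (z.1 : ℕ)) h2
    simp at this
    have hge : p ≤ (b : ℕ) := by rw [← this]; exact Nat.le_add_right _ _
    omega
  · have hdiv : a.val / k = b.val / k := by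
      have := congrArg (fun z => (z.1 : ℕ)) h2
      simp at this
      exact this
    have hmod : a.val % k = b.val % k := by
      have := congrArg (fun z => (z.2 : ℕ)) h2
      simpa using this
    conv_lhs => rw [← Nat.div_add_mod a.val k]
    conv_rhs => rw [← Nat.div_add_mod b.val k]
    rw [hdiv, hmod]

lemma qPoly_eq (p q k : ℕ) (hk : 0 < k) (hpkq : k * q ≤ p) (a : Fin (k*q))
    (hdiv : a.val / k < q) :
    qPoly p q k (Fin.castLE hpkq a) ⟨a.val / k, hdiv⟩
      = monomial (mm p q k hk hpkq a) 1 + gg p q k hk hpkq a := by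
  rw [qPoly, ← Finset.add_sum_erase _ _ (Finset.mem_univ (i0 p q k hk a))]
  rw [gg, mm]
  congr 1
  rw [← X_mul_X]
  rfl

end Stmt2Inst

/-- Let `p, q, k` be positive integers with `p ≥ kq`.  Then the
subsequence `(q_{α, p+⌈α/k⌉})_{1 ≤ α ≤ kq}` of the quadratics `q_{αμ}` — the block of
indices `α` with `(m−1)k < α ≤ mk` being paired with `μ = p+m`, for `1 ≤ m ≤ q` — is a
regular sequence in `P_k`.  (Here `α` is indexed from `0` by `a : Fin (k*q)`, so the
1-based pairing `μ = p + ⌈α/k⌉` becomes the 0-based pairing `μ = p + (a / k)`.) -/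
theorem stmt2 (p q k : ℕ) (hp : 0 < p) (hq : 0 < q) (hk : 0 < k) (hpkq : k * q ≤ p) :
    RingTheory.Sequence.IsRegular (MvPolynomial (Fin (p + q) × Fin k) ℂ)
      (List.ofFn fun a : Fin (k * q) =>
        qPoly p q k (Fin.castLE hpkq a)
          ⟨a.val / k, (Nat.div_lt_iff_lt_mul hk).mpr (by simpa [mul_comm] using a.isLt)⟩) := by
  refine Stmt2Aux.isRegular_ofFn (Stmt2Inst.ww p q k) (Stmt2Inst.mm p q k hk hpkq)
    (Stmt2Inst.gg p q k hk hpkq) _ ?_ ?_ ?_ ?_ ?_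
  · intro a
    exact Stmt2Inst.qPoly_eq p q k hk hpkq a _
  · exact Stmt2Inst.weight_gg p q k hk hpkq
  · intro a
    rw [Stmt2Inst.weight_mm p q k hk hpkq]
    omega
  · exact Stmt2Inst.mm_cop p q k hk hpkq
  · intro a
    rw [Stmt2Inst.qPoly_eq p q k hk hpkq a _]
    rw [map_add, constantCoeff_monomial]
    have : Stmt2Inst.mm p q k hk hpkq a ≠ 0 := by
      intro hh
      have := congrArg (fun z => z (Stmt2Inst.vA p q k hpkq a, Stmt2Inst.i0 p q k hk a)) hh
      classical
      simp [Stmt2Inst.mm, Finsupp.single_apply] at this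
    rw [if_neg this]
    rw [Stmt2Inst.gg, map_sum]
    simp
end

section
/- Let p, q, k be positive integers and P_k = ℂ[z_{βi} : 1 ≤ β ≤ p+q, 1 ≤ i ≤ k]. Set q_{αμ} = Σ_{i=1}^k z_{αi} z_{μi} for 1 ≤ α ≤ p, p+1 ≤ μ ≤ p+q, and let I be the ideal of P_k generated by all the q_{αμ}. Suppose f is a polynomial involving only the 'positive' variables z_{αi} (1 ≤ α ≤ p) and g is a polynomial involving only the 'negative' variables z_{μi} (p+1 ≤ μ ≤ p+q). If f + g ∈ I, then f and g are constants with f = −g; in particular, if f or g has zero constant term, then f = 0 and g = 0. -/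
open MvPolynomial

/-- Let `p, q, k` be positive integers and `I ⊆ P_k` the ideal generated
by all the quadratics `q_{αμ}`.  Suppose `f` involves only the "positive" variables
`z_{αi}` (`1 ≤ α ≤ p`), i.e. `f` is the image of some `f₀ ∈ ℂ[z_{αi}]` under the
inclusion of polynomial rings, and `g` involves only the "negative" variables `z_{μi}`
(`p+1 ≤ μ ≤ p+q`).  If `f + g ∈ I`, then `f` and `g` are constants with `f = −g`; in
particular, if `f` or `g` has zero constant term, then `f = 0` and `g = 0`. -/
theorem stmt3 (p q k : ℕ) (hp : 0 < p) (hq : 0 < q) (hk : 0 < k)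
    (f₀ : MvPolynomial (Fin p × Fin k) ℂ) (g₀ : MvPolynomial (Fin q × Fin k) ℂ)
    (f g : MvPolynomial (Fin (p + q) × Fin k) ℂ)
    (hf : f = rename (fun x : Fin p × Fin k => (Fin.castAdd q x.1, x.2)) f₀)
    (hg : g = rename (fun x : Fin q × Fin k => (Fin.natAdd p x.1, x.2)) g₀)
    (hfg : f + g ∈ Ideal.span {h | ∃ (α : Fin p) (μ : Fin q), h = qPoly p q k α μ}) :
    (∃ c : ℂ, f = C c ∧ g = C (-c)) ∧
      ((constantCoeff f = 0 ∨ constantCoeff g = 0) → f = 0 ∧ g = 0) := by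
  classical
  -- the substitution killing the negative variables
  set φ : MvPolynomial (Fin (p + q) × Fin k) ℂ →ₐ[ℂ] MvPolynomial (Fin p × Fin k) ℂ :=
    aeval (fun v : Fin (p + q) × Fin k =>
      Fin.addCases (motive := fun _ => MvPolynomial (Fin p × Fin k) ℂ)
        (fun α => X (α, v.2)) (fun _ => 0) v.1) with hφdef
  -- the substitution killing the positive variables
  set ψ : MvPolynomial (Fin (p + q) × Fin k) ℂ →ₐ[ℂ] MvPolynomial (Fin q × Fin k) ℂ :=
    aeval (fun v : Fin (p + q) × Fin k =>
      Fin.addCases (motive := fun _ => MvPolynomial (Fin q × Fin k) ℂ)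
        (fun _ => 0) (fun μ => X (μ, v.2)) v.1) with hψdef
  have hφf : φ f = f₀ := by
    rw [hf, hφdef, aeval_rename]
    have : ((fun v : Fin (p + q) × Fin k =>
        Fin.addCases (motive := fun _ => MvPolynomial (Fin p × Fin k) ℂ)
          (fun α => X (α, v.2)) (fun _ => 0) v.1) ∘
        (fun x : Fin p × Fin k => (Fin.castAdd q x.1, x.2)))
        = (X : Fin p × Fin k → MvPolynomial (Fin p × Fin k) ℂ) := by
      funext x
      simp [Function.comp]
    rw [this, aeval_X_left, AlgHom.id_apply]
  have hφg : φ g = C (constantCoeff g₀) := by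
    rw [hg, hφdef, aeval_rename]
    have : ((fun v : Fin (p + q) × Fin k =>
        Fin.addCases (motive := fun _ => MvPolynomial (Fin p × Fin k) ℂ)
          (fun α => X (α, v.2)) (fun _ => 0) v.1) ∘
        (fun x : Fin q × Fin k => (Fin.natAdd p x.1, x.2)))
        = (fun _ => (0 : MvPolynomial (Fin p × Fin k) ℂ)) := by
      funext x
      simp [Function.comp]
    rw [this, aeval_zero', algebraMap_eq]
  have hψf : ψ f = C (constantCoeff f₀) := by
    rw [hf, hψdef, aeval_rename]
    have : ((fun v : Fin (p + q) × Fin k =>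
        Fin.addCases (motive := fun _ => MvPolynomial (Fin q × Fin k) ℂ)
          (fun _ => 0) (fun μ => X (μ, v.2)) v.1) ∘
        (fun x : Fin p × Fin k => (Fin.castAdd q x.1, x.2)))
        = (fun _ => (0 : MvPolynomial (Fin q × Fin k) ℂ)) := by
      funext x
      simp [Function.comp]
    rw [this, aeval_zero', algebraMap_eq]
  have hψg : ψ g = g₀ := by
    rw [hg, hψdef, aeval_rename]
    have : ((fun v : Fin (p + q) × Fin k =>
        Fin.addCases (motive := fun _ => MvPolynomial (Fin q × Fin k) ℂ)
          (fun _ => 0) (fun μ => X (μ, v.2)) v.1) ∘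
        (fun x : Fin q × Fin k => (Fin.natAdd p x.1, x.2)))
        = (X : Fin q × Fin k → MvPolynomial (Fin q × Fin k) ℂ) := by
      funext x
      simp [Function.comp]
    rw [this, aeval_X_left, AlgHom.id_apply]
  -- φ kills the ideal
  have hφI : φ (f + g) = 0 := by
    have hle : Ideal.span {h | ∃ (α : Fin p) (μ : Fin q), h = qPoly p q k α μ}
        ≤ RingHom.ker φ.toRingHom := by
      rw [Ideal.span_le]
      rintro h ⟨α, μ, rfl⟩
      simp only [SetLike.mem_coe, RingHom.mem_ker, AlgHom.coe_ringHom_mk,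
        qPoly]
      rw [hφdef]
      simp [qPoly]
    have := hle hfg
    rwa [RingHom.mem_ker] at this
  have hψI : ψ (f + g) = 0 := by
    have hle : Ideal.span {h | ∃ (α : Fin p) (μ : Fin q), h = qPoly p q k α μ}
        ≤ RingHom.ker ψ.toRingHom := by
      rw [Ideal.span_le]
      rintro h ⟨α, μ, rfl⟩
      simp only [SetLike.mem_coe, RingHom.mem_ker]
      rw [hψdef]
      simp [qPoly]
    have := hle hfg
    rwa [RingHom.mem_ker] at this
  rw [map_add, hφf, hφg] at hφI
  rw [map_add, hψf, hψg] at hψI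
  -- so f₀ = C (-d), g₀ = C (-c)
  have hf₀ : f₀ = C (-(constantCoeff g₀)) := by
    rw [map_neg]; linear_combination hφI
  have hg₀ : g₀ = C (-(constantCoeff f₀)) := by
    rw [map_neg]; linear_combination hψI
  set c := constantCoeff f₀ with hc
  have hcd : c = -(constantCoeff g₀) := by
    rw [hc, hf₀]; simp
  have hf₀' : f₀ = C c := by rw [hf₀, ← hcd]
  have hg₀' : g₀ = C (-c) := by rw [hg₀]
  have hfc : f = C c := by rw [hf, hf₀', rename_C]
  have hgc : g = C (-c) := by rw [hg, hg₀', rename_C]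
  refine ⟨⟨c, hfc, hgc⟩, ?_⟩
  rintro (h0 | h0)
  · rw [hfc, constantCoeff_C] at h0
    constructor <;> simp [hfc, hgc, h0]
  · rw [hgc, constantCoeff_C, neg_eq_zero] at h0
    constructor <;> simp [hfc, hgc, h0]
end

section
/- Let k ≥ 1 and let S_k = ℂ[r_{ij} (1 ≤ i ≤ j ≤ k), w₁, …, w_k] be the polynomial ring in k(k+1)/2 + k variables; for i > j write r_{ij} = r_{ji}. Define the cubic polynomials c_j = Σ_{i=1}^k r_{ij} w_i for 1 ≤ j ≤ k. Then (c₁, …, c_k) is a regular sequence in S_k. -/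
open MvPolynomial

/-! # Auxiliary general lemmas -/

variable {R : Type*} [CommRing R]

lemma mem_span_Iio (a : ℕ → R) (n : ℕ) (x : R) :
    x ∈ Ideal.span (a '' Set.Iio n) ↔ ∃ t : ℕ → R, x = ∑ i ∈ Finset.range n, t i * a i := by
  have h : a '' Set.Iio n = Set.range (fun i : Fin n => a i.val) := by
    ext y
    simp only [Set.mem_image, Set.mem_range, Set.mem_Iio]
    constructor
    · rintro ⟨i, hi, rfl⟩; exact ⟨⟨i, hi⟩, rfl⟩
    · rintro ⟨i, rfl⟩; exact ⟨i, i.2, rfl⟩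
  rw [h, Ideal.span, Submodule.mem_span_range_iff_exists_fun]
  constructor
  · rintro ⟨c, rfl⟩
    refine ⟨fun i => if h : i < n then c ⟨i, h⟩ else 0, ?_⟩
    rw [← Fin.sum_univ_eq_sum_range (fun i => _) n]
    apply Finset.sum_congr rfl
    intro i _
    simp [smul_eq_mul]
  · rintro ⟨t, rfl⟩
    refine ⟨fun i => t i, ?_⟩
    rw [Fin.sum_univ_eq_sum_range (fun i => t i • a i) n]
    simp [smul_eq_mul]

lemma koszul (a : ℕ → R) :
    ∀ (n : ℕ), (∀ i < n, ∀ f : R, f * a i ∈ Ideal.span (a '' Set.Iio i) →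
      f ∈ Ideal.span (a '' Set.Iio i)) →
    ∀ g : ℕ → R, (∑ i ∈ Finset.range n, g i * a i = 0) →
    ∃ h : ℕ → ℕ → R, (∀ i m, h i m = - h m i) ∧
      ∀ i < n, g i = ∑ m ∈ Finset.range n, h i m * a m := by
  intro n
  induction n with
  | zero => intro _ g _; exact ⟨0, by simp, by omega⟩
  | succ n ih =>
    intro hreg g hg
    rw [Finset.sum_range_succ] at hg
    have h1 : g n * a n ∈ Ideal.span (a '' Set.Iio n) := by
      have : g n * a n = - ∑ i ∈ Finset.range n, g i * a i := by linear_combination hg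
      rw [this]
      refine neg_mem (Ideal.sum_mem _ fun i hi => Ideal.mul_mem_left _ _ ?_)
      exact Ideal.subset_span ⟨i, Finset.mem_range.mp hi, rfl⟩
    have h2 := hreg n (Nat.lt_succ_self n) (g n) h1
    obtain ⟨t, ht⟩ := (mem_span_Iio a n (g n)).mp h2
    have hG : ∑ i ∈ Finset.range n, (g i + t i * a n) * a i = 0 := by
      rw [Finset.sum_congr rfl (fun i _ => add_mul (g i) (t i * a n) (a i))]
      rw [Finset.sum_add_distrib]
      have : ∑ i ∈ Finset.range n, t i * a n * a i
          = (∑ i ∈ Finset.range n, t i * a i) * a n := by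
        rw [Finset.sum_mul]; apply Finset.sum_congr rfl; intro i _; ring
      rw [this, ← ht]
      linear_combination hg
    obtain ⟨h', hanti, hh'⟩ := ih (fun i hi => hreg i (by omega)) _ hG
    refine ⟨fun i m => if i < n ∧ m < n then h' i m else if i < n ∧ m = n then - t i
      else if i = n ∧ m < n then t m else 0, ?_, ?_⟩
    · intro i m
      dsimp only
      split_ifs <;> first | exact hanti i m | (exfalso; omega) | ring
    · intro i hi
      dsimp only
      rw [Finset.sum_range_succ]
      by_cases h3 : i < n
      · have : ∀ m ∈ Finset.range n,
            (if i < n ∧ m < n then h' i m else if i < n ∧ m = n then - t i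
              else if i = n ∧ m < n then t m else 0) * a m = h' i m * a m := by
          intro m hm
          rw [if_pos ⟨h3, Finset.mem_range.mp hm⟩]
        rw [Finset.sum_congr rfl this]
        have h4 : ¬ (i < n ∧ (n:ℕ) < n) := by omega
        rw [if_neg h4, if_pos ⟨h3, rfl⟩, ← hh' i h3]
        ring
      · have hin : i = n := by omega
        have heq : ∀ m ∈ Finset.range n,
            (if i < n ∧ m < n then h' i m else if i < n ∧ m = n then - t i
              else if i = n ∧ m < n then t m else 0) * a m = t m * a m := by
          intro m hm
          have hmn := Finset.mem_range.mp hm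
          rw [if_neg (by omega), if_neg (by omega), if_pos ⟨hin, hmn⟩]
        rw [Finset.sum_congr rfl heq, if_neg (by omega), if_neg (by omega),
          if_neg (by omega), hin, ← ht]
        ring

/-! # The concrete setup -/

open MvPolynomial

noncomputable def cseq {σ : Type*} (Rv : ℕ → ℕ → σ) (Wv : ℕ → σ) (k j : ℕ) :
    MvPolynomial σ ℂ := ∑ i ∈ Finset.range k, X (Rv i j) * X (Wv i)

open Classical in
noncomputable def epsm {σ : Type*} (Wv : ℕ → σ) (k : ℕ) :
    MvPolynomial σ ℂ →+* MvPolynomial σ ℂ :=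
  eval₂Hom C (fun x => if x = Wv k then 0 else X x)

open Classical in
noncomputable def phim {σ : Type*} (Rv : ℕ → ℕ → σ) (Wv : ℕ → σ) (k j : ℕ) :
    MvPolynomial σ ℂ →+* FractionRing (MvPolynomial σ ℂ) :=
  eval₂Hom ((algebraMap (MvPolynomial σ ℂ) (FractionRing (MvPolynomial σ ℂ))).comp C)
    (fun x => if hx : ∃ m, m < j ∧ x = Rv k m
      then - algebraMap (MvPolynomial σ ℂ) (FractionRing (MvPolynomial σ ℂ))
            (cseq Rv Wv k hx.choose)
          / algebraMap (MvPolynomial σ ℂ) (FractionRing (MvPolynomial σ ℂ)) (X (Wv k))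
      else algebraMap (MvPolynomial σ ℂ) (FractionRing (MvPolynomial σ ℂ)) (X x))

open Classical in
lemma epsm_X {σ : Type*} (Wv : ℕ → σ) (k : ℕ) (x : σ) :
    epsm Wv k (X x) = if x = Wv k then 0 else X x := by
  simp [epsm]

open Classical in
lemma phim_X {σ : Type*} (Rv : ℕ → ℕ → σ) (Wv : ℕ → σ) (k j : ℕ) (x : σ) :
    phim Rv Wv k j (X x) = (if hx : ∃ m, m < j ∧ x = Rv k m
      then - algebraMap (MvPolynomial σ ℂ) (FractionRing (MvPolynomial σ ℂ))
            (cseq Rv Wv k hx.choose)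
          / algebraMap (MvPolynomial σ ℂ) (FractionRing (MvPolynomial σ ℂ)) (X (Wv k))
      else algebraMap (MvPolynomial σ ℂ) (FractionRing (MvPolynomial σ ℂ)) (X x)) := by
  simp [phim]

lemma phim_C {σ : Type*} (Rv : ℕ → ℕ → σ) (Wv : ℕ → σ) (k j : ℕ) (a : ℂ) :
    phim Rv Wv k j (C a) =
      algebraMap (MvPolynomial σ ℂ) (FractionRing (MvPolynomial σ ℂ)) (C a) := by
  simp [phim]

set_option maxHeartbeats 1000000 in
set_option synthInstance.maxHeartbeats 200000 in
theorem key {σ : Type*} (Rv : ℕ → ℕ → σ) (Wv : ℕ → σ) (hsym : ∀ i j, Rv i j = Rv j i) :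
    ∀ k : ℕ,
    (∀ i, i < k → ∀ i', i' < k → Wv i = Wv i' → i = i') →
    (∀ i, i < k → ∀ j, j < k → ∀ m, m < k → Rv i j ≠ Wv m) →
    (∀ i, i < k → ∀ j, j < k → ∀ i', i' < k → ∀ j', j' < k → Rv i j = Rv i' j' →
      (i = i' ∧ j = j') ∨ (i = j' ∧ j = i')) →
    ∀ j, j < k → ∀ f : MvPolynomial σ ℂ,
      f * cseq Rv Wv k j ∈ Ideal.span (cseq Rv Wv k '' Set.Iio j) →
      f ∈ Ideal.span (cseq Rv Wv k '' Set.Iio j) := by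
  intro k
  induction k with
  | zero => intro _ _ _ j hj; omega
  | succ k IH =>
    intro hW hRW hRR j hj
    classical
    have hjk : j ≤ k := by omega
    set P := MvPolynomial σ ℂ with hP
    set K := FractionRing (MvPolynomial σ ℂ) with hK
    set ι := algebraMap (MvPolynomial σ ℂ) (FractionRing (MvPolynomial σ ℂ)) with hι
    set w : MvPolynomial σ ℂ := X (Wv k) with hw_def
    set c : ℕ → MvPolynomial σ ℂ := cseq Rv Wv (k + 1) with hc_def
    set d : ℕ → MvPolynomial σ ℂ := cseq Rv Wv k with hd_def
    set I : Ideal (MvPolynomial σ ℂ) := Ideal.span (c '' Set.Iio j) with hI_def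
    set ε : MvPolynomial σ ℂ →+* MvPolynomial σ ℂ := epsm Wv k with hε_def
    set Φ : MvPolynomial σ ℂ →+* FractionRing (MvPolynomial σ ℂ) := phim Rv Wv k j with hΦ_def
    have hιinj : Function.Injective ι := IsFractionRing.injective _ _
    have hιw : ι w ≠ 0 := fun hh => X_ne_zero (σ := σ) (R := ℂ) (Wv k)
      (hιinj (by rw [hh, map_zero]))
    have hcd : ∀ m, c m = d m + X (Rv k m) * w := by
      intro m
      rw [hc_def, hd_def, cseq, cseq, Finset.sum_range_succ, hw_def]
    have hIc : ∀ m, m < j → c m ∈ I := fun m hm => Ideal.subset_span ⟨m, hm, rfl⟩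
    -- ε facts
    have hεX : ∀ x : σ, ε (X x) = if x = Wv k then 0 else X x := fun x => epsm_X Wv k x
    have hεw : ε w = 0 := by rw [hw_def, hεX, if_pos rfl]
    have hεd : ∀ m, m < k + 1 → ε (d m) = d m := by
      intro m hm
      rw [hd_def]
      show ε (cseq Rv Wv k m) = cseq Rv Wv k m
      rw [cseq, map_sum]
      refine Finset.sum_congr rfl fun i hi => ?_
      have hik := Finset.mem_range.mp hi
      rw [map_mul, hεX, hεX, if_neg (fun h => hRW i (by omega) m (by omega) k (by omega) h),
        if_neg (fun h => absurd (hW i (by omega) k (by omega) h) (by omega))]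
    have hεc : ∀ i, i < k + 1 → ε (c i) = d i := by
      intro i hi
      rw [hcd i, map_add, map_mul, hεw, mul_zero, add_zero, hεd i hi]
    have hsub : ∀ f : MvPolynomial σ ℂ, f - ε f ∈ Ideal.span {w} := by
      intro f
      induction f using MvPolynomial.induction_on with
      | C a =>
        rw [hε_def]
        show C a - epsm Wv k (C a) ∈ Ideal.span {w}
        rw [epsm, eval₂Hom_C, sub_self]
        exact zero_mem _
      | add p q hp hq =>
        rw [map_add]
        have := Ideal.add_mem _ hp hq
        have heq : p - ε p + (q - ε q) = p + q - (ε p + ε q) := by ring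
        rwa [heq] at this
      | mul_X p x hp =>
        rw [map_mul, hεX]
        by_cases hx : x = Wv k
        · rw [if_pos hx, mul_zero, sub_zero, hx]
          exact Ideal.mul_mem_left _ _ (Ideal.subset_span rfl)
        · rw [if_neg hx]
          have heq : p * X x - ε p * X x = (p - ε p) * X x := by ring
          rw [heq]
          exact Ideal.mul_mem_right _ _ hp
    -- torsion-freeness of w modulo I
    have htor1 : ∀ f : MvPolynomial σ ℂ, f * w ∈ I → f ∈ I := by
      intro f hf
      obtain ⟨g, hg⟩ := (mem_span_Iio c j (f * w)).mp hf
      have hsyz : ∑ i ∈ Finset.range j, ε (g i) * d i = 0 := by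
        have h0 := congrArg ε hg
        rw [map_mul, hεw, mul_zero, map_sum] at h0
        rw [Finset.sum_congr rfl (fun i hi => ?hterm)] at h0
        · exact h0.symm
        case hterm =>
          have hij := Finset.mem_range.mp hi
          rw [map_mul, hεc i (by omega)]
      have hreg : ∀ i < j, ∀ f' : MvPolynomial σ ℂ,
          f' * d i ∈ Ideal.span (d '' Set.Iio i) → f' ∈ Ideal.span (d '' Set.Iio i) := by
        intro i hi
        exact IH (fun a ha b hb => hW a (by omega) b (by omega))
          (fun a ha b hb m hm => hRW a (by omega) b (by omega) m (by omega))
          (fun a ha b hb a' ha' b' hb' =>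
            hRR a (by omega) b (by omega) a' (by omega) b' (by omega))
          i (by omega)
      obtain ⟨h, hanti, hh⟩ := koszul d j hreg _ hsyz
      have hgd : ∀ i : ℕ, ∃ e : MvPolynomial σ ℂ, i < j →
          g i = (∑ m ∈ Finset.range j, ε (h i m) * d m) + e * w := by
        intro i
        by_cases hi : i < j
        · have h1 : ε (ε (g i)) = ∑ m ∈ Finset.range j, ε (h i m) * d m := by
            rw [hh i hi, map_sum]
            refine Finset.sum_congr rfl fun m hm => ?_
            have hmj := Finset.mem_range.mp hm
            rw [map_mul, hεd m (by omega)]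
          have h2 : g i - ∑ m ∈ Finset.range j, ε (h i m) * d m ∈ Ideal.span {w} := by
            rw [← h1]
            have h3 := Ideal.add_mem _ (hsub (g i)) (hsub (ε (g i)))
            have heq : g i - ε (g i) + (ε (g i) - ε (ε (g i))) = g i - ε (ε (g i)) := by ring
            rwa [heq] at h3
          rw [Ideal.mem_span_singleton] at h2
          obtain ⟨e, he⟩ := h2
          exact ⟨e, fun _ => by linear_combination he⟩
        · exact ⟨0, fun h => absurd h hi⟩
      choose e he using hgd
      have hfw : f * w = ∑ i ∈ Finset.range j,
          ((∑ m ∈ Finset.range j, ε (h i m) * d m) + e i * w) * c i :=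
        hg.trans (Finset.sum_congr rfl fun i hi =>
          by rw [← he i (Finset.mem_range.mp hi)])
      set A : MvPolynomial σ ℂ := ∑ i ∈ Finset.range j,
        (∑ m ∈ Finset.range j, ε (h i m) * d m) * c i with hA_def
      set B : MvPolynomial σ ℂ := ∑ i ∈ Finset.range j, e i * c i with hB_def
      set C2 : MvPolynomial σ ℂ := ∑ i ∈ Finset.range j, ∑ m ∈ Finset.range j,
        ε (h i m) * X (Rv k m) * c i with hC2_def
      set S : MvPolynomial σ ℂ := ∑ i ∈ Finset.range j, ∑ m ∈ Finset.range j,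
        ε (h i m) * (c m * c i) with hS_def
      set F : MvPolynomial σ ℂ := f - B + C2 with hF_def
      have hA : A + w * C2 = S := by
        rw [hA_def, hC2_def, hS_def, Finset.mul_sum, ← Finset.sum_add_distrib]
        refine Finset.sum_congr rfl fun i _ => ?_
        rw [Finset.mul_sum, Finset.sum_mul, ← Finset.sum_add_distrib]
        refine Finset.sum_congr rfl fun m _ => ?_
        rw [hcd m]
        ring
      have hfw2 : f * w = A + B * w := by
        rw [hfw, hA_def, hB_def, Finset.sum_mul, ← Finset.sum_add_distrib]
        refine Finset.sum_congr rfl fun i _ => ?_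
        ring
      have hwF : w * F = S := by
        have hstep : w * F = f * w - B * w + w * C2 := by rw [hF_def]; ring
        rw [hstep, hfw2]
        linear_combination hA
      have hzero : S = 0 := by
        have h2 : S = -S := by
          calc S = ∑ m ∈ Finset.range j, ∑ i ∈ Finset.range j, ε (h i m) * (c m * c i) :=
                Finset.sum_comm
            _ = ∑ m ∈ Finset.range j, ∑ i ∈ Finset.range j,
                  -(ε (h m i) * (c i * c m)) := by
                refine Finset.sum_congr rfl fun m _ => Finset.sum_congr rfl fun i _ => ?_
                rw [hanti i m, map_neg]
                ring
            _ = -S := by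
                rw [hS_def]
                rw [← Finset.sum_neg_distrib]
                refine Finset.sum_congr rfl fun m _ => ?_
                rw [← Finset.sum_neg_distrib]
        have h3 : (2 : MvPolynomial σ ℂ) * S = 0 := by linear_combination h2
        rcases mul_eq_zero.mp h3 with h4 | h4
        · exact absurd h4 two_ne_zero
        · exact h4
      have hF0 : F = 0 := by
        rcases mul_eq_zero.mp (hwF.trans hzero) with h4 | h4
        · exact absurd h4 (X_ne_zero (σ := σ) (R := ℂ) (Wv k))
        · exact h4
      have hfeq : f = B - C2 := by
        have h5 : f - B + C2 = 0 := hF_def ▸ hF0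
        linear_combination h5
      rw [hfeq]
      refine Ideal.sub_mem _ ?_ ?_
      · rw [hB_def]
        exact Ideal.sum_mem _ fun i hi =>
          Ideal.mul_mem_left _ _ (hIc i (Finset.mem_range.mp hi))
      · rw [hC2_def]
        exact Ideal.sum_mem _ fun i hi => Ideal.sum_mem _ fun m hm =>
          Ideal.mul_mem_left _ _ (hIc i (Finset.mem_range.mp hi))
    have htorN : ∀ (N : ℕ) (f : MvPolynomial σ ℂ), w ^ N * f ∈ I → f ∈ I := by
      intro N
      induction N with
      | zero => intro f hf; rwa [pow_zero, one_mul] at hf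
      | succ N ihN =>
        intro f hf
        refine ihN f (htor1 _ ?_)
        have heq : w ^ N * f * w = w ^ (N + 1) * f := by ring
        rwa [heq]
    -- Φ facts
    have hΦX : ∀ x : σ, Φ (X x) = (if hx : ∃ m, m < j ∧ x = Rv k m
        then - ι (cseq Rv Wv k hx.choose) / ι w else ι (X x)) :=
      fun x => phim_X Rv Wv k j x
    have hv1 : ∀ m, m < j → Φ (X (Rv k m)) = - ι (d m) / ι w := by
      intro m hm
      have hx : ∃ m', m' < j ∧ Rv k m = Rv k m' := ⟨m, hm, rfl⟩
      rw [hΦX, dif_pos hx]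
      obtain ⟨hlt, heq⟩ := hx.choose_spec
      have h2 := hRR k (by omega) m (by omega) k (by omega) hx.choose (by omega) heq
      have hmm : hx.choose = m := by omega
      rw [hmm, hd_def]
    have hv2 : ∀ x : σ, (∀ m, m < j → x ≠ Rv k m) → Φ (X x) = ι (X x) := by
      intro x hx
      rw [hΦX, dif_neg]
      rintro ⟨m, hm, heq⟩
      exact hx m hm heq
    have hvW : ∀ i, i < k + 1 → Φ (X (Wv i)) = ι (X (Wv i)) := by
      intro i hi
      exact hv2 _ (fun m hm heq => hRW k (by omega) m (by omega) i (by omega) heq.symm)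
    have hvR : ∀ a b, a < k → b < k → Φ (X (Rv a b)) = ι (X (Rv a b)) := by
      intro a b ha hb
      refine hv2 _ (fun m hm heq => ?_)
      rcases hRR a (by omega) b (by omega) k (by omega) m (by omega) heq with ⟨h1, _⟩ | ⟨_, h2⟩
      · omega
      · omega
    have hΦw : Φ w = ι w := by rw [hw_def]; exact hvW k (by omega)
    have hΦd : ∀ m, m < k → Φ (d m) = ι (d m) := by
      intro m hm
      rw [hd_def]
      show Φ (cseq Rv Wv k m) = ι (cseq Rv Wv k m)
      rw [cseq, map_sum, map_sum]
      refine Finset.sum_congr rfl fun i hi => ?_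
      have hik := Finset.mem_range.mp hi
      rw [map_mul, map_mul, hvR i m hik hm, hvW i (by omega)]
    have hΦc0 : ∀ i, i < j → Φ (c i) = 0 := by
      intro i hi
      rw [hcd i, map_add, map_mul, hΦw, hv1 i hi, hΦd i (by omega)]
      have hdiv : - ι (d i) / ι w * ι w = - ι (d i) := div_mul_cancel₀ _ hιw
      rw [hdiv]
      ring
    have hΦI : ∀ p : MvPolynomial σ ℂ, p ∈ I → Φ p = 0 := by
      intro p hp
      have hle : I ≤ RingHom.ker Φ := by
        rw [hI_def]
        refine Ideal.span_le.mpr ?_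
        rintro x ⟨m, hm, rfl⟩
        exact (RingHom.mem_ker).mpr (hΦc0 m hm)
      exact (RingHom.mem_ker).mp (hle hp)
    -- the "no y variables" reduction
    have hnoY : ∀ f : MvPolynomial σ ℂ, ∃ (N : ℕ) (g : MvPolynomial σ ℂ),
        w ^ N * f - g ∈ I ∧ Φ g = ι g := by
      intro f
      induction f using MvPolynomial.induction_on with
      | C a =>
        exact ⟨0, C a, by simp, phim_C Rv Wv k j a⟩
      | add p q hp hq =>
        obtain ⟨N1, g1, h1, e1⟩ := hp
        obtain ⟨N2, g2, h2, e2⟩ := hq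
        refine ⟨N1 + N2, w ^ N2 * g1 + w ^ N1 * g2, ?_, ?_⟩
        · have heq : w ^ (N1 + N2) * (p + q) - (w ^ N2 * g1 + w ^ N1 * g2)
              = w ^ N2 * (w ^ N1 * p - g1) + w ^ N1 * (w ^ N2 * q - g2) := by ring
          rw [heq]
          exact Ideal.add_mem _ (Ideal.mul_mem_left _ _ h1) (Ideal.mul_mem_left _ _ h2)
        · simp only [map_add, map_mul, map_pow, hΦw, e1, e2]
      | mul_X p x hp =>
        obtain ⟨N1, g1, h1, e1⟩ := hp
        by_cases hx : ∃ m, m < j ∧ x = Rv k m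
        · obtain ⟨m, hm, rfl⟩ := hx
          refine ⟨N1 + 1, -(g1 * d m), ?_, ?_⟩
          · have heq : w ^ (N1 + 1) * (p * X (Rv k m)) - -(g1 * d m)
                = (w ^ N1 * p) * c m - (w ^ N1 * p - g1) * d m := by
              rw [hcd m]; ring
            rw [heq]
            exact Ideal.sub_mem _ (Ideal.mul_mem_left _ _ (hIc m hm))
              (Ideal.mul_mem_right _ _ h1)
          · rw [map_neg, map_mul, e1, hΦd m (by omega), map_neg, map_mul]
        · refine ⟨N1, g1 * X x, ?_, ?_⟩
          · have heq : w ^ N1 * (p * X x) - g1 * X x = (w ^ N1 * p - g1) * X x := by ring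
            rw [heq]
            exact Ideal.mul_mem_right _ _ h1
          · rw [map_mul, map_mul, e1, hv2 x (fun m hm heq => hx ⟨m, hm, heq⟩)]
    -- Φ (c j) ≠ 0
    have hΦcj : Φ (c j) ≠ 0 := by
      by_cases hjlt : j < k
      · have hcη : Φ (c j) = ι (c j) := by
          rw [hc_def]
          show Φ (cseq Rv Wv (k + 1) j) = ι (cseq Rv Wv (k + 1) j)
          rw [cseq, map_sum, map_sum]
          refine Finset.sum_congr rfl fun i hi => ?_
          have hik := Finset.mem_range.mp hi
          rw [map_mul, map_mul, hvW i (by omega), hv2 (Rv i j) ?_]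
          intro m hm heq
          rcases hRR i (by omega) j (by omega) k (by omega) m (by omega) heq with
            ⟨h1, h2⟩ | ⟨h1, h2⟩
          · omega
          · omega
        rw [hcη]
        intro h0
        have hc0 : c j = 0 := hιinj (by rw [h0, map_zero])
        have h6 := congrArg (eval (fun _ : σ => (1 : ℂ))) hc0
        rw [map_zero, hc_def] at h6
        have hv7 : eval (fun _ : σ => (1 : ℂ)) (cseq Rv Wv (k + 1) j) = ((k : ℂ) + 1) := by
          rw [cseq, map_sum]
          have h8 : ∀ i ∈ Finset.range (k + 1),
              eval (fun _ : σ => (1 : ℂ)) (X (Rv i j) * X (Wv i)) = 1 := fun i _ => by simp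
          rw [Finset.sum_congr rfl h8, Finset.sum_const, Finset.card_range]
          simp
        rw [hv7] at h6
        have : ((k : ℂ) + 1) ≠ 0 := by
          exact_mod_cast Nat.cast_add_one_ne_zero (R := ℂ) k
        exact this h6
      · have hjeq : j = k := by omega
        intro h0
        have hx : ∀ i, i < k → Φ (X (Rv i k)) = - ι (d i) / ι w := by
          intro i hik
          rw [hsym i k]
          exact hv1 i (by omega)
        have hRkk : Φ (X (Rv k k)) = ι (X (Rv k k)) := by
          refine hv2 _ (fun m hm heq => ?_)
          rcases hRR k (by omega) k (by omega) k (by omega) m (by omega) heq with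
            ⟨_, h2⟩ | ⟨h2, _⟩ <;> omega
        have hsum : Φ (c j) = (∑ i ∈ Finset.range k, (- ι (d i) / ι w) * ι (X (Wv i)))
            + ι (X (Rv k k)) * ι w := by
          rw [hc_def, hjeq]
          show Φ (cseq Rv Wv (k + 1) k) = _
          rw [cseq, Finset.sum_range_succ, map_add, map_sum]
          congr 1
          · refine Finset.sum_congr rfl fun i hi => ?_
            have hik := Finset.mem_range.mp hi
            rw [map_mul, hx i hik, hvW i (by omega)]
          · rw [map_mul, hRkk, show (X (Wv k) : MvPolynomial σ ℂ) = w from hw_def.symm, hΦw]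
        have hT : Φ (c j) * ι w = ι (X (Rv k k) * w * w
            - ∑ i ∈ Finset.range k, d i * X (Wv i)) := by
          rw [hsum, add_mul, Finset.sum_mul]
          simp only [map_sub, map_sum, map_mul]
          have e2 : ∀ i ∈ Finset.range k, (- ι (d i) / ι w * ι (X (Wv i))) * ι w
              = -(ι (d i) * ι (X (Wv i))) := by
            intro i _
            field_simp
          rw [Finset.sum_congr rfl e2, Finset.sum_neg_distrib]
          ring
        rw [h0, zero_mul] at hT
        have hT0 : (X (Rv k k) * w * w - ∑ i ∈ Finset.range k, d i * X (Wv i)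
            : MvPolynomial σ ℂ) = 0 := hιinj (by rw [map_zero]; exact hT.symm)
        set pt : σ → ℂ := fun x => if x = Rv k k then 1
          else if ∃ i, i < k + 1 ∧ x = Wv i then 1 else 0 with hpt_def
        have hptW : ∀ i, i < k + 1 → pt (Wv i) = 1 := by
          intro i hi
          rw [hpt_def]
          dsimp only
          rw [if_neg (fun heq => hRW k (by omega) k (by omega) i (by omega) heq.symm),
            if_pos ⟨i, hi, rfl⟩]
        have hptR : ∀ a b, a < k + 1 → b < k + 1 → ¬(a = k ∧ b = k) → pt (Rv a b) = 0 := by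
          intro a b ha hb hab
          rw [hpt_def]
          dsimp only
          rw [if_neg, if_neg]
          · rintro ⟨i, hi, heq⟩
            exact hRW a ha b hb i hi heq
          · intro heq
            rcases hRR a ha b hb k (by omega) k (by omega) heq with ⟨h1, h2⟩ | ⟨h1, h2⟩ <;>
              exact hab ⟨h1, h2⟩
        have h1 : eval pt (X (Rv k k) : MvPolynomial σ ℂ) = 1 := by
          rw [eval_X, hpt_def]
          dsimp only
          rw [if_pos rfl]
        have h2 : eval pt w = 1 := by
          rw [hw_def, eval_X]
          exact hptW k (by omega)
        have h3 : ∀ i, i < k → eval pt (d i) = 0 := by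
          intro i hik
          rw [hd_def]
          show eval pt (cseq Rv Wv k i) = 0
          rw [cseq, map_sum]
          refine Finset.sum_eq_zero fun m hm => ?_
          have hmk := Finset.mem_range.mp hm
          rw [map_mul, eval_X, hptR m i (by omega) (by omega) (by omega), zero_mul]
        have h4 := congrArg (eval pt) hT0
        rw [map_zero, map_sub, map_mul, map_mul, h1, h2, map_sum] at h4
        have h5 : ∑ i ∈ Finset.range k, eval pt (d i * X (Wv i)) = 0 :=
          Finset.sum_eq_zero fun i hi => by
            rw [map_mul, h3 i (Finset.mem_range.mp hi), zero_mul]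
        rw [h5] at h4
        norm_num at h4
    -- conclusion
    intro f hf
    have hΦf : Φ f = 0 := by
      have h0 := hΦI _ hf
      rw [map_mul] at h0
      rcases mul_eq_zero.mp h0 with h' | h'
      · exact h'
      · exact absurd h' hΦcj
    obtain ⟨N, g, hNg, he⟩ := hnoY f
    have hg0 : g = 0 := by
      have h0 := hΦI _ hNg
      rw [map_sub, map_mul, map_pow, hΦw, hΦf, mul_zero, zero_sub, neg_eq_zero, he] at h0
      exact hιinj (by rw [h0, map_zero])
    rw [hg0, sub_zero] at hNg
    exact htorN N f hNg

lemma isWeaklyRegular_of_spans {R : Type*} [CommRing R] (l : List R)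
    (H : ∀ (i : ℕ) (h : i < l.length) (f : R),
      f * l[i] ∈ Ideal.span {x | x ∈ l.take i} → f ∈ Ideal.span {x | x ∈ l.take i}) :
    RingTheory.Sequence.IsWeaklyRegular R l := by
  refine ⟨fun i h => ?_⟩
  have hsm : (Ideal.ofList (l.take i) • ⊤ : Submodule R R) = Ideal.ofList (l.take i) := by
    rw [smul_eq_mul, Ideal.mul_top]
  rw [hsm]
  intro a b hab
  obtain ⟨a, rfl⟩ := Submodule.Quotient.mk_surjective _ a
  obtain ⟨b, rfl⟩ := Submodule.Quotient.mk_surjective _ b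
  have hab' : (Submodule.Quotient.mk (l[i] * a)
        : R ⧸ (Ideal.ofList (l.take i) : Submodule R R))
      = Submodule.Quotient.mk (l[i] * b) := hab
  rw [Submodule.Quotient.eq] at hab'
  rw [Submodule.Quotient.eq]
  have h2 : (a - b) * l[i] ∈ Ideal.ofList (l.take i) := by
    have heq : l[i] * a - l[i] * b = (a - b) * l[i] := by ring
    rwa [heq] at hab'
  exact H i h (a - b) h2


/-- The variable `r_{ij}` of `S_k = ℂ[r_{ij} (1 ≤ i ≤ j ≤ k), w₁, …, w_k]`; the
`r`-variables are indexed by unordered pairs (`Sym2`), which encodes the convention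
`r_{ij} = r_{ji}`. -/
noncomputable def rVar (k : ℕ) (i j : Fin k) :
    MvPolynomial (Sym2 (Fin k) ⊕ Fin k) ℂ :=
  X (Sum.inl s(i, j))

/-- The variable `w_i` of `S_k`. -/
noncomputable def wVar (k : ℕ) (i : Fin k) :
    MvPolynomial (Sym2 (Fin k) ⊕ Fin k) ℂ :=
  X (Sum.inr i)

/-- The cubic polynomial `c_j = Σ_{i=1}^k r_{ij} w_i` in `S_k`. -/
noncomputable def cPoly (k : ℕ) (j : Fin k) :
    MvPolynomial (Sym2 (Fin k) ⊕ Fin k) ℂ :=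
  ∑ i : Fin k, rVar k i j * wVar k i

/-- Let `k ≥ 1` and let `S_k = ℂ[r_{ij} (1 ≤ i ≤ j ≤ k), w₁, …, w_k]`,
with the convention `r_{ij} = r_{ji}` for `i > j`, and let `c_j = Σ_{i=1}^k r_{ij} w_i`.
Then `(c₁, …, c_k)` is a regular sequence in `S_k`. -/
theorem stmt4 (k : ℕ) (hk : 1 ≤ k) :
    RingTheory.Sequence.IsRegular (MvPolynomial (Sym2 (Fin k) ⊕ Fin k) ℂ)
      (List.ofFn fun j : Fin k => cPoly k j) := by
  classical
  set e : ℕ → Fin k := fun n => if h : n < k then (⟨n, h⟩ : Fin k) else ⟨0, hk⟩ with he_def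
  set Rv : ℕ → ℕ → Sym2 (Fin k) ⊕ Fin k := fun i j => Sum.inl s(e i, e j) with hRv_def
  set Wv : ℕ → Sym2 (Fin k) ⊕ Fin k := fun i => Sum.inr (e i) with hWv_def
  have heval : ∀ i, i < k → ((e i : Fin k) : ℕ) = i := by
    intro i hi
    rw [he_def]
    simp [dif_pos hi]
  have hsym : ∀ i j, Rv i j = Rv j i := by
    intro i j
    rw [hRv_def]
    dsimp only
    rw [Sym2.eq_swap]
  have hW : ∀ i, i < k → ∀ i', i' < k → Wv i = Wv i' → i = i' := by
    intro i hi i' hi' h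
    rw [hWv_def] at h
    dsimp only at h
    have h2 : e i = e i' := Sum.inr.inj h
    have := congrArg Fin.val h2
    rwa [heval i hi, heval i' hi'] at this
  have hRW : ∀ i, i < k → ∀ j, j < k → ∀ m, m < k → Rv i j ≠ Wv m := by
    intro i _ j _ m _ h
    rw [hRv_def, hWv_def] at h
    simp at h
  have hRR : ∀ i, i < k → ∀ j, j < k → ∀ i', i' < k → ∀ j', j' < k → Rv i j = Rv i' j' →
      (i = i' ∧ j = j') ∨ (i = j' ∧ j = i') := by
    intro i hi j hj i' hi' j' hj' h
    rw [hRv_def] at h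
    dsimp only at h
    have h2 : s(e i, e j) = s(e i', e j') := Sum.inl.inj h
    rw [Sym2.eq_iff] at h2
    rcases h2 with ⟨ha, hb⟩ | ⟨ha, hb⟩
    · left
      constructor
      · have := congrArg Fin.val ha
        rwa [heval i hi, heval i' hi'] at this
      · have := congrArg Fin.val hb
        rwa [heval j hj, heval j' hj'] at this
    · right
      constructor
      · have := congrArg Fin.val ha
        rwa [heval i hi, heval j' hj'] at this
      · have := congrArg Fin.val hb
        rwa [heval j hj, heval i' hi'] at this
  have hkey := key Rv Wv hsym k (hW) (hRW) (hRR)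
  have hckey : ∀ (j : ℕ) (hj : j < k), cseq Rv Wv k j = cPoly k ⟨j, hj⟩ := by
    intro j hj
    rw [cseq, cPoly]
    rw [← Fin.sum_univ_eq_sum_range (fun i => X (Rv i j) * X (Wv i)) k]
    refine Finset.sum_congr rfl fun i _ => ?_
    have h1 : e (i : ℕ) = i := by
      rw [he_def]
      simp [i.isLt]
    have h2 : e j = ⟨j, hj⟩ := by
      rw [he_def]
      simp [dif_pos hj]
    rw [hRv_def, hWv_def, rVar, wVar]
    dsimp only
    rw [h1, h2]
  have hgetl : ∀ (i : ℕ) (h : i < (List.ofFn (fun j : Fin k => cPoly k j)).length),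
      (List.ofFn (fun j : Fin k => cPoly k j))[i] = cseq Rv Wv k i := by
    intro i h
    rw [List.getElem_ofFn]
    exact (hckey i (by simpa using h)).symm
  have hset : ∀ i : ℕ, i ≤ k →
      {x | x ∈ (List.ofFn (fun j : Fin k => cPoly k j)).take i}
        = cseq Rv Wv k '' Set.Iio i := by
    intro i hik
    ext x
    simp only [Set.mem_setOf_eq, Set.mem_image, Set.mem_Iio, List.mem_take_iff_getElem]
    constructor
    · rintro ⟨m, hm, rfl⟩
      have hmk : m < i := by
        simp only [List.length_ofFn] at hm
        omega
      exact ⟨m, hmk, (hgetl m (by simp; omega)).symm⟩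
    · rintro ⟨m, hm, rfl⟩
      refine ⟨m, ?_, hgetl m (by simp; omega)⟩
      simp only [List.length_ofFn]
      omega
  refine ⟨isWeaklyRegular_of_spans _ ?_, ?_⟩
  · intro i h f hf
    have hik : i < k := by simpa using h
    rw [hset i (by omega)] at hf ⊢
    rw [hgetl i h] at hf
    exact hkey i hik f hf
  · rw [smul_eq_mul, Ideal.mul_top]
    intro htop
    have h1 : (1 : MvPolynomial (Sym2 (Fin k) ⊕ Fin k) ℂ)
        ∈ Ideal.ofList (List.ofFn (fun j : Fin k => cPoly k j)) := by
      rw [← htop]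
      trivial
    have hle : Ideal.ofList (List.ofFn (fun j : Fin k => cPoly k j))
        ≤ RingHom.ker (eval (fun _ : Sym2 (Fin k) ⊕ Fin k => (0 : ℂ))) := by
      refine Ideal.span_le.mpr ?_
      intro x hx
      simp only [Set.mem_setOf_eq, List.mem_ofFn] at hx
      obtain ⟨j, rfl⟩ := hx
      rw [SetLike.mem_coe, RingHom.mem_ker]
      simp [cPoly, rVar, wVar]
    have h2 := hle h1
    rw [RingHom.mem_ker] at h2
    simp at h2
end

section
/- Let k ≥ 1, S_k = ℂ[r_{ij} (1 ≤ i ≤ j ≤ k), w₁, …, w_k] with r_{ij} = r_{ji} for i > j, and c_j = Σ_{i=1}^k r_{ij} w_i for 1 ≤ j ≤ k. If f ∈ ℂ[w₁, …, w_k] (regarded as a subring of S_k) lies in the ideal (c₁, …, c_k) of S_k, then f = 0. Consequently the composite ℂ[w₁,…,w_k] → S_k → S_k/(c₁,…,c_k) is injective. -/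
open MvPolynomial

/-- The inclusion `ℂ[w₁,…,w_k] → S_k`. -/
noncomputable def wIncl (k : ℕ) :
    MvPolynomial (Fin k) ℂ →ₐ[ℂ] MvPolynomial (Sym2 (Fin k) ⊕ Fin k) ℂ :=
  rename Sum.inr

noncomputable def killR (k : ℕ) :
    MvPolynomial (Sym2 (Fin k) ⊕ Fin k) ℂ →ₐ[ℂ] MvPolynomial (Fin k) ℂ :=
  aeval (Sum.elim (fun _ => 0) X)

lemma killR_wIncl (k : ℕ) (f : MvPolynomial (Fin k) ℂ) : killR k (wIncl k f) = f := by
  rw [killR, wIncl, aeval_rename, Sum.elim_comp_inr]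
  exact aeval_X_left_apply f

lemma killR_cPoly (k : ℕ) (j : Fin k) : killR k (cPoly k j) = 0 := by
  simp [killR, cPoly, rVar, wVar]

lemma key_s6 (k : ℕ) (f : MvPolynomial (Fin k) ℂ)
    (hf : wIncl k f ∈ Ideal.span (Set.range fun j : Fin k => cPoly k j)) : f = 0 := by
  have hle : Ideal.span (Set.range fun j : Fin k => cPoly k j) ≤
      RingHom.ker (killR k).toRingHom := by
    rw [Ideal.span_le]
    rintro _ ⟨j, rfl⟩
    simp [RingHom.mem_ker, killR_cPoly]
  have := hle hf
  rw [RingHom.mem_ker] at this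
  simpa [killR_wIncl] using this

/-- Let `k ≥ 1`.  If `f ∈ ℂ[w₁, …, w_k]` (regarded as a subring of
`S_k`) lies in the ideal `(c₁, …, c_k)` of `S_k`, then `f = 0`.  Consequently the
composite `ℂ[w₁,…,w_k] → S_k → S_k/(c₁,…,c_k)` is injective. -/
theorem stmt6 (k : ℕ) (hk : 1 ≤ k) :
    (∀ f : MvPolynomial (Fin k) ℂ,
      wIncl k f ∈ Ideal.span (Set.range fun j : Fin k => cPoly k j) → wIncl k f = 0) ∧
    Function.Injective fun f : MvPolynomial (Fin k) ℂ =>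
      Ideal.Quotient.mk (Ideal.span (Set.range fun j : Fin k => cPoly k j)) (wIncl k f) := by
  constructor
  · intro f hf
    rw [key_s6 k f hf]
    simp
  · intro f g hfg
    simp only [Ideal.Quotient.mk_eq_mk, Ideal.Quotient.eq] at hfg
    rw [← map_sub] at hfg
    have := key_s6 k (f - g) hfg
    exact sub_eq_zero.mp this
end

section
/- Let n, k, ℓ be positive integers with ℓ ≤ min(n, k), and let P = ℂ[z_{αi} : 1 ≤ α ≤ n, 1 ≤ i ≤ k]. For strictly increasing tuples I = (i₁ < ⋯ < i_ℓ) in {1,…,n} and J = (j₁ < ⋯ < j_ℓ) in {1,…,k}, let f_{I,J} ∈ P be the determinant of the ℓ×ℓ matrix (z_{i_a, j_b})_{1 ≤ a,b ≤ ℓ}. Then f_{I,J} is harmonic: for all 1 ≤ i, j ≤ k, Σ_{α=1}^n ∂²f_{I,J} / ∂z_{αi} ∂z_{αj} = 0. -/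
open MvPolynomial

/-- Derivative of a product of (images of) variables. -/
lemma pderiv_prod_X {ι σ' : Type*} [DecidableEq ι] [DecidableEq σ'] (v : σ')
    (s : Finset ι) (g : ι → σ') :
    pderiv v (∏ a ∈ s, (X (g a) : MvPolynomial σ' ℂ)) =
      ∑ a ∈ s, if g a = v then ∏ b ∈ s.erase a, (X (g b) : MvPolynomial σ' ℂ) else 0 := by
  induction s using Finset.induction_on with
  | empty => simp
  | @insert a s ha ih =>
      rw [Finset.prod_insert ha, pderiv_mul, Finset.sum_insert ha, ih, Finset.mul_sum]
      congr 1
      · by_cases hv : g a = v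
        · subst hv; rw [pderiv_X_self, if_pos rfl, one_mul, Finset.erase_insert ha]
        · rw [pderiv_X_of_ne hv, if_neg hv, zero_mul]
      · refine Finset.sum_congr rfl fun b hb => ?_
        rw [mul_ite, mul_zero]
        by_cases hv : g b = v
        · rw [if_pos hv, if_pos hv, Finset.erase_insert_of_ne (ne_of_mem_of_not_mem hb ha).symm,
            Finset.prod_insert (fun h => ha (Finset.mem_of_mem_erase h))]
        · rw [if_neg hv, if_neg hv]

/-- The minor `f_{I,J}`: the determinant of the `ℓ×ℓ` submatrix of the generic `n×k`
matrix `Z = (z_{αi})` with rows `I` and columns `J`, as a polynomial in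
`P = ℂ[z_{αi} : 1 ≤ α ≤ n, 1 ≤ i ≤ k]`. -/
noncomputable def minorPoly (n k ℓ : ℕ) (I : Fin ℓ → Fin n) (J : Fin ℓ → Fin k) :
    MvPolynomial (Fin n × Fin k) ℂ :=
  Matrix.det (Matrix.of fun a b : Fin ℓ => (X (I a, J b) : MvPolynomial (Fin n × Fin k) ℂ))

/-- Let `n, k, ℓ` be positive integers with `ℓ ≤ min(n,k)`.  For strictly
increasing tuples `I` in `{1,…,n}` and `J` in `{1,…,k}` of length `ℓ`, the minor
`f_{I,J}` is harmonic: for all `1 ≤ i, j ≤ k`,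
`Σ_{α=1}^n ∂²f_{I,J} / ∂z_{αi} ∂z_{αj} = 0`. -/
theorem stmt7 (n k ℓ : ℕ) (hn : 0 < n) (hk : 0 < k) (hℓ : 0 < ℓ)
    (hℓn : ℓ ≤ n) (hℓk : ℓ ≤ k)
    (I : Fin ℓ → Fin n) (hI : StrictMono I) (J : Fin ℓ → Fin k) (hJ : StrictMono J)
    (i j : Fin k) :
    ∑ α : Fin n, pderiv (α, i) (pderiv (α, j) (minorPoly n k ℓ I J)) = 0 := by
  apply Finset.sum_eq_zero
  intro α _
  unfold minorPoly
  rw [Matrix.det_apply]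
  rw [map_sum, map_sum]
  apply Finset.sum_eq_zero
  intro σ _
  rw [Units.smul_def, map_zsmul, map_zsmul]
  have hprod : (∏ b : Fin ℓ, (Matrix.of fun a b : Fin ℓ =>
      (X (I a, J b) : MvPolynomial (Fin n × Fin k) ℂ)) (σ b) b) =
      ∏ b : Fin ℓ, (X (I (σ b), J b) : MvPolynomial (Fin n × Fin k) ℂ) := rfl
  rw [hprod, pderiv_prod_X (α, j) Finset.univ (fun b : Fin ℓ => (I (σ b), J b)), map_sum]
  rw [Finset.sum_eq_zero, smul_zero]
  intro a _
  by_cases h : (I (σ a), J a) = (α, j)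
  · rw [if_pos h]
    apply pderiv_eq_zero_of_notMem_vars
    intro hmem
    have := vars_prod (s := Finset.univ.erase a)
      (fun b : Fin ℓ => (X ((I (σ b), J b)) : MvPolynomial (Fin n × Fin k) ℂ)) hmem
    rw [Finset.mem_biUnion] at this
    obtain ⟨b, hb, hbv⟩ := this
    rw [vars_X, Finset.mem_singleton] at hbv
    have h1 : I (σ b) = α := congrArg Prod.fst hbv.symm
    have h2 : I (σ a) = α := congrArg Prod.fst h
    have : b = a := σ.injective (hI.injective (h1.trans h2.symm))
    exact (Finset.mem_erase.mp hb).1 this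
  · rw [if_neg h, map_zero]
end
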